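/- arXiv:2312.01434 — 12 statements merged into one kernel-verified Lean document; each statement's English description precedes it below -/
import Mathlib

section
/- Let p be an odd prime, n ≥ 1, and let f : F_{p^n} → F_{p^n} be an odd APN function. Then for all nonzero a, b ∈ F_{p^n}, the BCT entry of f at (a,b) equals the (−1)-DDT entry of f at (a,−b), i.e., B_f(a,b) = ₋₁Δ_f(a,−b). -/
open Finset

/-- The `c`-DDT entry of `f` at `(a, b)`:
the number of `x` with `f (x + a) - c * f x = b`. -/
def cDDT {F : Type*} [Field F] [Fintype F] [DecidableEq F]
    (f : F → F) (c a b : F) : ℕ :=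
  (Finset.univ.filter (fun x : F => f (x + a) - c * f x = b)).card

/-- The `c`-differential uniformity of `f`: the maximum of the `c`-DDT entries
over all `a, b`, where `a ≠ 0` is required when `c = 1`. -/
def cDU {F : Type*} [Field F] [Fintype F] [DecidableEq F]
    (f : F → F) (c : F) : ℕ :=
  (Finset.univ.filter (fun ab : F × F => c = 1 → ab.1 ≠ 0)).sup
    (fun ab => cDDT f c ab.1 ab.2)

/-- The classical differential uniformity of `f`. -/
def DU {F : Type*} [Field F] [Fintype F] [DecidableEq F] (f : F → F) : ℕ :=
  cDU f 1

/-- The BCT entry of `f` at `(a, b)`: the number of pairs `(x, y)` with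
`f x - f y = b` and `f (x + a) - f (y + a) = b`. -/
def BCT {F : Type*} [Field F] [Fintype F] [DecidableEq F]
    (f : F → F) (a b : F) : ℕ :=
  (Finset.univ.filter (fun xy : F × F =>
    f xy.1 - f xy.2 = b ∧ f (xy.1 + a) - f (xy.2 + a) = b)).card

/-- The boomerang uniformity of `f`: the maximum of the BCT entries over all
nonzero `a, b`. -/
def BU {F : Type*} [Field F] [Fintype F] [DecidableEq F] (f : F → F) : ℕ :=
  (Finset.univ.filter (fun ab : F × F => ab.1 ≠ 0 ∧ ab.2 ≠ 0)).sup
    (fun ab => BCT f ab.1 ab.2)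

/-- The quadratic character: `χ 0 = 0`, `χ α = 1` if `α` is a nonzero square,
and `χ α = -1` otherwise. -/
noncomputable def chi {F : Type*} [Field F] (α : F) : ℤ :=
  letI := Classical.dec (α = 0)
  letI := Classical.dec (IsSquare α)
  if α = 0 then 0 else if IsSquare α then 1 else -1

/-- The `c`-differential spectrum entry `ω_i` of a power function:
the number of `b` with `cΔ_f(1, b) = i`. -/
def omegaSpec {F : Type*} [Field F] [Fintype F] [DecidableEq F]
    (f : F → F) (c : F) (i : ℕ) : ℕ :=
  (Finset.univ.filter (fun b : F => cDDT f c 1 b = i)).card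

/-- The boomerang spectrum entry `v_i` of a power function:
the number of nonzero `b` with `B_f(1, b) = i`. -/
def vSpec {F : Type*} [Field F] [Fintype F] [DecidableEq F]
    (f : F → F) (i : ℕ) : ℕ :=
  (Finset.univ.filter (fun b : F => b ≠ 0 ∧ BCT f 1 b = i)).card

theorem bct_eq_neg_one_ddt (p n : ℕ) (hp : p.Prime) (hpodd : Odd p) (hn : 1 ≤ n)
    {F : Type*} [Field F] [Fintype F] [DecidableEq F]
    (hF : Fintype.card F = p ^ n)
    (f : F → F) (hfodd : ∀ x : F, f (-x) = -f x) (hAPN : DU f ≤ 2) :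
    ∀ a b : F, a ≠ 0 → b ≠ 0 → BCT f a b = cDDT f (-1) a (-b) := by
  intro a b ha hb
  -- characteristic is odd, so 2 ≠ 0
  have h2 : (2 : F) ≠ 0 := by
    intro h
    have hpF : (p : F) = 0 := by
      have hc : ((Fintype.card F : F)) = 0 := FiniteField.cast_card_eq_zero F
      rw [hF] at hc
      push_cast at hc
      exact pow_eq_zero_iff (by omega) |>.mp hc
    haveI := ringChar.charP F
    have h1 : ringChar F ∣ p :=
      (CharP.cast_eq_zero_iff F (ringChar F) p).mp hpF
    have h2' : ringChar F ∣ 2 :=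
      (CharP.cast_eq_zero_iff F (ringChar F) 2).mp (by exact_mod_cast h)
    rcases hp.eq_one_or_self_of_dvd _ h1 with h1' | h1'
    · have : ((1 : ℕ) : F) = 0 :=
        (CharP.cast_eq_zero_iff F (ringChar F) 1).mpr (by rw [h1'])
      simp at this
    · have hple : p ≤ 2 := Nat.le_of_dvd (by norm_num) (h1' ▸ h2')
      have := hp.two_le
      have := Nat.odd_iff.mp hpodd
      omega
  -- APN bound on classical DDT entries
  have hDDT : ∀ c : F, (univ.filter (fun x : F => f (x + a) - f x = c)).card ≤ 2 := by
    intro c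
    have hmem : (a, c) ∈ univ.filter (fun ab : F × F => (1 : F) = 1 → ab.1 ≠ 0) := by
      simp [ha]
    have hle : cDDT f 1 a c ≤ DU f :=
      Finset.le_sup (f := fun ab : F × F => cDDT f 1 ab.1 ab.2) hmem
    have : cDDT f 1 a c = (univ.filter (fun x : F => f (x + a) - f x = c)).card := by
      simp [cDDT]
    omega
  -- derivative values at x and -x-a agree
  have hder : ∀ x : F, f (-x - a + a) - f (-x - a) = f (x + a) - f x := by
    intro x
    have e1 : -x - a + a = -x := by ring
    have e2 : -x - a = -(x + a) := by ring
    rw [e1, e2, hfodd, hfodd]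
    ring
  -- key: solutions of D_a f(y) = D_a f(x) are exactly x and -x-a
  have key : ∀ x y : F, f (y + a) - f y = f (x + a) - f x → y = x ∨ y = -x - a := by
    intro x y hxy
    by_contra hcon
    push_neg at hcon
    obtain ⟨hyx, hyxa⟩ := hcon
    set T := univ.filter (fun z : F => f (z + a) - f z = f (x + a) - f x) with hT
    have hxT : x ∈ T := by simp [hT]
    have hyT : y ∈ T := by simp [hT, hxy]
    have hxaT : -x - a ∈ T := Finset.mem_filter.mpr ⟨Finset.mem_univ _, hder x⟩
    have hyaT : -y - a ∈ T := Finset.mem_filter.mpr ⟨Finset.mem_univ _, (hder y).trans hxy⟩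
    have h3 : 2 < T.card := by
      rw [Finset.two_lt_card_iff]
      by_cases hx : x = -x - a
      · refine ⟨x, y, -y - a, hxT, hyT, hyaT, Ne.symm hyx, ?_, ?_⟩
        · intro hE
          exact hyxa (by linear_combination hE)
        · intro hE
          apply hyx
          have h4 : (2 : F) * y = 2 * x := by linear_combination hE - hx
          exact mul_left_cancel₀ h2 h4
      · exact ⟨x, -x - a, y, hxT, hxaT, hyT, hx, Ne.symm hyx, fun hE => hyxa hE.symm⟩
    rw [hT] at h3
    have := hDDT (f (x + a) - f x)
    omega
  -- BCT set equals image of the set {x : f x + f (x+a) = b} under x ↦ (x, -x-a)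
  have hset : univ.filter (fun xy : F × F =>
      f xy.1 - f xy.2 = b ∧ f (xy.1 + a) - f (xy.2 + a) = b)
      = (univ.filter (fun x : F => f (x + a) + f x = b)).image (fun x => (x, -x - a)) := by
    ext ⟨x, y⟩
    simp only [Finset.mem_filter, Finset.mem_image, Finset.mem_univ, true_and]
    constructor
    · rintro ⟨h1, h1'⟩
      have hd : f (y + a) - f y = f (x + a) - f x := by linear_combination h1 - h1'
      rcases key x y hd with h | h
      · exfalso; apply hb; rw [h] at h1; simpa using h1.symm
      · refine ⟨x, ?_, by rw [h]⟩
        rw [h] at h1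
        have e2 : -x - a = -(x + a) := by ring
        rw [e2, hfodd] at h1
        linear_combination h1
    · rintro ⟨z, hz, hE⟩
      have hz1 : z = x := congrArg Prod.fst hE
      have hz2 : -z - a = y := congrArg Prod.snd hE
      rw [← hz1, ← hz2]
      have e1 : -z - a + a = -z := by ring
      have e2 : -z - a = -(z + a) := by ring
      constructor
      · rw [e2, hfodd]; linear_combination hz
      · rw [e1, hfodd]; linear_combination hz
  have hBCT : BCT f a b = (univ.filter (fun x : F => f (x + a) + f x = b)).card := by
    rw [BCT, hset]
    exact Finset.card_image_of_injective _ (fun u v hE => congrArg Prod.fst hE)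
  -- the cDDT set
  have hcDDT : cDDT f (-1) a (-b) = (univ.filter (fun x : F => f (x + a) + f x = -b)).card := by
    rw [cDDT]
    congr 1
    ext x
    simp only [Finset.mem_filter, Finset.mem_univ, true_and]
    constructor <;> intro h <;> linear_combination h
  rw [hBCT, hcDDT]
  apply Finset.card_bij' (fun x _ => -x - a) (fun x _ => -x - a)
  · intro x hx
    simp only [Finset.mem_filter, Finset.mem_univ, true_and] at hx ⊢
    have e1 : -x - a + a = -x := by ring
    have e2 : -x - a = -(x + a) := by ring
    rw [e1, e2, hfodd, hfodd]
    linear_combination -hx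
  · intro x hx
    simp only [Finset.mem_filter, Finset.mem_univ, true_and] at hx ⊢
    have e1 : -x - a + a = -x := by ring
    have e2 : -x - a = -(x + a) := by ring
    rw [e1, e2, hfodd, hfodd]
    linear_combination -hx
  · intro x _; ring
  · intro x _; ring
end

section
/- Let p be an odd prime, n ≥ 1, and let f : F_{p^n} → F_{p^n} be an odd APN function that is also a permutation of F_{p^n}. Then the boomerang uniformity of f equals its (−1)-differential uniformity, i.e., B_f = ₋₁Δ_f. -/
open Finset

theorem bu_eq_neg_one_du (p n : ℕ) (hp : p.Prime) (hpodd : Odd p) (hn : 1 ≤ n)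
    {F : Type*} [Field F] [Fintype F] [DecidableEq F]
    (hF : Fintype.card F = p ^ n)
    (f : F → F) (hfperm : Function.Bijective f)
    (hfodd : ∀ x : F, f (-x) = -f x) (hAPN : DU f ≤ 2) :
    BU f = cDU f (-1) := by
  classical
  have hinj := hfperm.injective
  -- characteristic is p, which is odd
  have hq : (ringChar F).Prime := CharP.char_is_prime F (ringChar F)
  obtain ⟨m, _, hcard'⟩ := FiniteField.card F (ringChar F)
  have hpq : p = ringChar F := by
    have h1 : p ∣ (ringChar F) ^ (m : ℕ) := by
      rw [← hcard', hF]
      exact dvd_pow_self p (by omega)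
    exact (Nat.prime_dvd_prime_iff_eq hp hq).mp (hp.dvd_of_dvd_pow h1)
  haveI hcharp : CharP F p := hpq ▸ ringChar.charP F
  have hp2 : p ≠ 2 := by
    rintro rfl
    exact (by decide : ¬ Odd 2) hpodd
  have h2F : (2 : F) ≠ 0 := by
    intro h
    have hdvd := (CharP.cast_eq_zero_iff F p 2).mp h
    have h12 := (Nat.dvd_prime Nat.prime_two).mp hdvd
    have := hp.two_le
    omega
  have hm1 : (-1 : F) ≠ 1 := by
    intro h
    apply h2F
    linear_combination -h
  have hf0 : f 0 = 0 := by
    have := hfodd 0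
    rw [neg_zero] at this
    have h2f : 2 * f 0 = 0 := by linear_combination this
    rcases mul_eq_zero.mp h2f with h | h
    · exact absurd h h2F
    · exact h
  -- APN pointwise bound
  have hAPNpt : ∀ a v : F, a ≠ 0 →
      (Finset.univ.filter (fun t : F => f (t + a) - f t = v)).card ≤ 2 := by
    intro a v ha
    have hmem : (a, v) ∈ Finset.univ.filter (fun ab : F × F => (1:F) = 1 → ab.1 ≠ 0) := by
      simp [ha]
    have := Finset.le_sup (f := fun ab : F × F => cDDT f 1 ab.1 ab.2) hmem
    calc (Finset.univ.filter (fun t : F => f (t + a) - f t = v)).card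
        = cDDT f 1 a v := by simp [cDDT]
      _ ≤ DU f := this
      _ ≤ 2 := hAPN
  -- key: BCT = cDDT for a,b ≠ 0
  have key : ∀ a b : F, a ≠ 0 → b ≠ 0 → BCT f a b = cDDT f (-1) a b := by
    intro a b ha hb
    unfold BCT cDDT
    have step1 : (Finset.univ.filter (fun xy : F × F =>
        f xy.1 - f xy.2 = b ∧ f (xy.1 + a) - f (xy.2 + a) = b)).card =
        (Finset.univ.filter (fun xy : F × F =>
        f (xy.1 + a) + f xy.2 = b ∧ f (xy.2 + a) + f xy.1 = b)).card := by
      apply Finset.card_bij' (fun xy _ => (xy.1, -xy.2 - a))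
        (fun xy _ => (xy.1, -xy.2 - a))
      case hi =>
        intro xy hxy
        simp only [Finset.mem_filter, Finset.mem_univ, true_and] at hxy ⊢
        obtain ⟨h1, h2⟩ := hxy
        constructor
        · have e : (-xy.2 - a) = -(xy.2 + a) := by ring
          rw [e, hfodd]
          linear_combination h2
        · have e : (-xy.2 - a + a) = -xy.2 := by ring
          rw [e, hfodd]
          linear_combination h1
      case hj =>
        intro xy hxy
        simp only [Finset.mem_filter, Finset.mem_univ, true_and] at hxy ⊢
        obtain ⟨h1, h2⟩ := hxy
        constructor
        · have e : (-xy.2 - a) = -(xy.2 + a) := by ring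
          rw [e, hfodd]
          linear_combination h2
        · have e : (-xy.2 - a + a) = -xy.2 := by ring
          rw [e, hfodd]
          linear_combination h1
      case left_inv =>
        intro xy _
        have e : -(-xy.2 - a) - a = xy.2 := by ring
        simp [e]
      case right_inv =>
        intro xy _
        have e : -(-xy.2 - a) - a = xy.2 := by ring
        simp [e]
    rw [step1]
    -- step 2: symmetric system forces x = y
    symm
    apply Finset.card_bij' (fun x _ => ((x, x) : F × F)) (fun xy _ => xy.1)
    case hi =>
      intro x hx
      simp only [Finset.mem_filter, Finset.mem_univ, true_and] at hx ⊢
      constructor <;> linear_combination hx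
    case hj =>
      intro xy hxy
      simp only [Finset.mem_filter, Finset.mem_univ, true_and] at hxy ⊢
      obtain ⟨h1, h2⟩ := hxy
      -- show xy.1 = xy.2
      have hxyeq : xy.1 = xy.2 := by
        by_contra hne
        set x := xy.1 with hxd
        set y := xy.2 with hyd
        set v := f (x + a) - f x with hv
        have hyv : f (y + a) - f y = v := by rw [hv]; linear_combination h2 - h1
        set S := Finset.univ.filter (fun t : F => f (t + a) - f t = v) with hS
        have hxS : x ∈ S := by simp [hS, hv]
        have hyS : y ∈ S := by simp [hS, hyv]
        have hnegmem : ∀ z : F, z ∈ S → -z - a ∈ S := by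
          intro z hz
          simp only [hS, Finset.mem_filter, Finset.mem_univ, true_and] at hz ⊢
          have e1 : (-z - a + a) = -z := by ring
          have e2 : (-z - a) = -(z + a) := by ring
          rw [e1, e2, hfodd, hfodd]
          linear_combination hz
        have hcS := hAPNpt a v ha
        rw [← hS] at hcS
        -- -x-a ∈ {x, y}
        have hmemxy : ∀ z : F, z ∈ S → z = x ∨ z = y := by
          intro z hz
          by_contra hc
          push_neg at hc
          have hsub : ({z, x, y} : Finset F) ⊆ S := by
            intro t ht
            simp only [Finset.mem_insert, Finset.mem_singleton] at ht
            rcases ht with rfl | rfl | rfl <;> assumption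
          have : ({z, x, y} : Finset F).card = 3 := by
            rw [Finset.card_insert_of_notMem (by simp [hc.1, hc.2]),
              Finset.card_insert_of_notMem (by simp [hne]), Finset.card_singleton]
          have := Finset.card_le_card hsub
          omega
        rcases hmemxy (-x - a) (hnegmem x hxS) with hx1 | hx2
        · -- -x - a = x; then consider -y-a
          rcases hmemxy (-y - a) (hnegmem y hyS) with hy1 | hy2
          · -- -y-a = x and -x-a = x → x = y
            exact hne (by linear_combination hy1 - hx1)
          · -- -y-a = y → together with -x-a = x : 2x = 2y
            have h2xy : 2 * x = 2 * y := by linear_combination hy2 - hx1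
            exact hne (by
              have := mul_left_cancel₀ h2F h2xy
              exact this)
        · -- -x-a = y: then b = 0
          apply hb
          rw [← hx2] at h1
          have e2 : (-x - a) = -(x + a) := by ring
          rw [e2, hfodd] at h1
          linear_combination -h1
      rw [hxyeq] at h2
      rw [hxyeq]
      linear_combination h2
    case left_inv =>
      intro x _
      rfl
    case right_inv =>
      intro xy hxy
      simp only [Finset.mem_filter, Finset.mem_univ, true_and] at hxy
      obtain ⟨h1, h2⟩ := hxy
      have hxyeq : xy.1 = xy.2 := by
        by_contra hne
        set x := xy.1
        set y := xy.2
        set v := f (x + a) - f x with hv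
        have hyv : f (y + a) - f y = v := by rw [hv]; linear_combination h2 - h1
        set S := Finset.univ.filter (fun t : F => f (t + a) - f t = v) with hS
        have hxS : x ∈ S := by simp [hS, hv]
        have hyS : y ∈ S := by simp [hS, hyv]
        have hnegmem : ∀ z : F, z ∈ S → -z - a ∈ S := by
          intro z hz
          simp only [hS, Finset.mem_filter, Finset.mem_univ, true_and] at hz ⊢
          have e1 : (-z - a + a) = -z := by ring
          have e2 : (-z - a) = -(z + a) := by ring
          rw [e1, e2, hfodd, hfodd]
          linear_combination hz
        have hcS := hAPNpt a v ha
        rw [← hS] at hcS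
        have hmemxy : ∀ z : F, z ∈ S → z = x ∨ z = y := by
          intro z hz
          by_contra hc
          push_neg at hc
          have hsub : ({z, x, y} : Finset F) ⊆ S := by
            intro t ht
            simp only [Finset.mem_insert, Finset.mem_singleton] at ht
            rcases ht with rfl | rfl | rfl <;> assumption
          have : ({z, x, y} : Finset F).card = 3 := by
            rw [Finset.card_insert_of_notMem (by simp [hc.1, hc.2]),
              Finset.card_insert_of_notMem (by simp [hne]), Finset.card_singleton]
          have := Finset.card_le_card hsub
          omega
        rcases hmemxy (-x - a) (hnegmem x hxS) with hx1 | hx2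
        · rcases hmemxy (-y - a) (hnegmem y hyS) with hy1 | hy2
          · exact hne (by linear_combination hy1 - hx1)
          · have h2xy : 2 * x = 2 * y := by linear_combination hy2 - hx1
            exact hne (mul_left_cancel₀ h2F h2xy)
        · apply hb
          rw [← hx2] at h1
          have e2 : (-x - a) = -(x + a) := by ring
          rw [e2, hfodd] at h1
          linear_combination -h1
      exact Prod.ext rfl hxyeq
  -- degenerate entries are small
  have hA0 : ∀ b : F, cDDT f (-1) 0 b ≤ 1 := by
    intro b
    unfold cDDT
    apply Finset.card_le_one.mpr
    intro x hx y hy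
    simp only [Finset.mem_filter, Finset.mem_univ, true_and, add_zero] at hx hy
    have : 2 * f x = 2 * f y := by linear_combination hx - hy
    exact hinj (mul_left_cancel₀ h2F this)
  have hB0 : ∀ a : F, cDDT f (-1) a 0 ≤ 1 := by
    intro a
    unfold cDDT
    apply Finset.card_le_one.mpr
    intro x hx y hy
    simp only [Finset.mem_filter, Finset.mem_univ, true_and] at hx hy
    have hx' : f (x + a) = f (-x) := by rw [hfodd]; linear_combination hx
    have hy' : f (y + a) = f (-y) := by rw [hfodd]; linear_combination hy
    have hx'' := hinj hx'
    have hy'' := hinj hy'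
    have : 2 * x = 2 * y := by linear_combination hx'' - hy''
    exact mul_left_cancel₀ h2F this
  -- witness: cDDT f (-1) 1 (f 1) ≥ 1
  have hf1 : f 1 ≠ 0 := by
    intro h
    have : (1 : F) = 0 := hinj (by rw [h, hf0])
    exact one_ne_zero this
  have hEx : 1 ≤ cDDT f (-1) 1 (f 1) := by
    unfold cDDT
    apply Finset.card_pos.mpr
    exact ⟨0, by simp [hf0]⟩
  -- put it together
  have hwit : (((1 : F), f 1) : F × F) ∈
      Finset.univ.filter (fun ab : F × F => ab.1 ≠ 0 ∧ ab.2 ≠ 0) := by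
    simp [hf1]
  set M := (Finset.univ.filter (fun ab : F × F => ab.1 ≠ 0 ∧ ab.2 ≠ 0)).sup
    (fun ab => cDDT f (-1) ab.1 ab.2) with hM
  have hBU : BU f = M := by
    unfold BU
    apply Finset.sup_congr rfl
    intro ab hab
    simp only [Finset.mem_filter, Finset.mem_univ, true_and] at hab
    exact key ab.1 ab.2 hab.1 hab.2
  have hM1 : 1 ≤ M := le_trans hEx (Finset.le_sup (f := fun ab : F × F => cDDT f (-1) ab.1 ab.2) hwit)
  have hDU : cDU f (-1) = M := by
    unfold cDU
    apply le_antisymm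
    · apply Finset.sup_le
      intro ab _
      by_cases ha : ab.1 = 0
      · refine le_trans ?_ hM1
        rw [ha]
        exact hA0 ab.2
      · by_cases hbz : ab.2 = 0
        · refine le_trans ?_ hM1
          rw [hbz]
          exact hB0 ab.1
        · exact Finset.le_sup (f := fun ab : F × F => cDDT f (-1) ab.1 ab.2)
            (by simp [ha, hbz])
    · apply Finset.sup_le
      intro ab hab
      exact Finset.le_sup (f := fun ab : F × F => cDDT f (-1) ab.1 ab.2)
        (by simp [hm1])
  rw [hBU, hDU]
end

section
/- Let p be an odd prime, n ≥ 1, and let f(X) = X^d be an odd APN power function on F_{p^n} with boomerang uniformity B_f and boomerang spectrum entries v_i. Then Σ_{i=0}^{B_f} v_i = p^n − 1 and Σ_{i=0}^{B_f} i·v_i = p^n − ₋₁Δ_f(1,0). -/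
open Finset

theorem boomerang_spectrum_identities (p n : ℕ) (hp : p.Prime) (hpodd : Odd p) (hn : 1 ≤ n)
    {F : Type*} [Field F] [Fintype F] [DecidableEq F]
    (hF : Fintype.card F = p ^ n)
    (d : ℕ) (f : F → F) (hfd : ∀ x : F, f x = x ^ d)
    (hfodd : ∀ x : F, f (-x) = -f x) (hAPN : DU f ≤ 2) :
    (∑ i ∈ Finset.range (BU f + 1), vSpec f i) = p ^ n - 1 ∧
    (∑ i ∈ Finset.range (BU f + 1), i * vSpec f i) = p ^ n - cDDT f (-1) 1 0 := by
  classical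
  have hn0 : n ≠ 0 := by omega
  have hcard : Fintype.card F = p ^ n := hF
  -- characteristic facts
  have hpF : (p : F) = 0 := by
    have h0 : ((Fintype.card F : F)) = 0 := FiniteField.cast_card_eq_zero F
    rw [hcard] at h0
    push_cast at h0
    exact pow_eq_zero_iff hn0 |>.mp h0
  have h2 : (2 : F) ≠ 0 := by
    intro h2
    obtain ⟨k, hk⟩ := hpodd
    have hpk : (p : F) = 2 * (k : F) + 1 := by rw [hk]; push_cast; ring
    rw [hpF, h2] at hpk
    simp at hpk
  set x0 : F := -(2⁻¹) with hx0
  have hfix : ∀ x : F, x = -1 - x ↔ x = x0 := by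
    intro x
    rw [hx0]
    constructor
    · intro h
      have h1 : 2 * x = -1 := by linear_combination h
      field_simp
      linear_combination h1
    · intro h
      subst h
      field_simp
      ring
  -- the derivative and APN bound
  set D : F → F := fun x => f (x + 1) - f x with hD
  have hD2 : ∀ b : F, (univ.filter fun x : F => D x = b).card ≤ 2 := by
    intro b
    have hmem : ((1, b) : F × F) ∈ univ.filter (fun ab : F × F => (1 : F) = 1 → ab.1 ≠ 0) := by
      simp
    have h1 : cDDT f 1 1 b ≤ DU f :=
      Finset.le_sup (f := fun ab : F × F => cDDT f 1 ab.1 ab.2) hmem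
    have h2' : cDDT f 1 1 b = (univ.filter fun x : F => D x = b).card := by
      unfold cDDT
      congr 1
      apply Finset.filter_congr
      intro x _
      simp [hD, one_mul]
    omega
  have hDsym : ∀ x : F, D (-1 - x) = D x := by
    intro x
    simp only [hD]
    rw [show (-1 : F) - x + 1 = -x by ring, show (-1 : F) - x = -(x + 1) by ring,
      hfodd, hfodd]
    ring
  -- characterization of D x = D y
  have hT : ∀ x y : F, D x = D y ↔ (y = x ∨ y = -1 - x) := by
    intro x y
    constructor
    · intro h
      by_contra hcon
      push_neg at hcon
      obtain ⟨hyx, hyx'⟩ := hcon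
      by_cases hxf : x = -1 - x
      · -- fiber contains x, y, -1-y, all distinct
        have hyy : y ≠ -1 - y := by
          intro hy
          rw [hfix] at hy hxf
          exact hyx (hy.trans hxf.symm)
        have hyx2 : -1 - y ≠ x := by
          intro hc
          apply hyx'
          rw [← hc]; ring
        have hsub : ({x, y, -1 - y} : Finset F) ⊆ univ.filter fun z : F => D z = D x := by
          intro z hz
          simp only [Finset.mem_insert, Finset.mem_singleton] at hz
          rcases hz with rfl | rfl | rfl <;> simp [Finset.mem_filter]
          · exact h.symm
          · rw [hDsym]; exact h.symm
        have hc3 : ({x, y, -1 - y} : Finset F).card = 3 := by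
          rw [Finset.card_insert_of_notMem (by simp [hyx.symm, Ne.symm hyx2]),
            Finset.card_insert_of_notMem (by simp [hyy]), Finset.card_singleton]
        have := Finset.card_le_card hsub
        have := hD2 (D x)
        omega
      · have hsub : ({x, -1 - x, y} : Finset F) ⊆ univ.filter fun z : F => D z = D x := by
          intro z hz
          simp only [Finset.mem_insert, Finset.mem_singleton] at hz
          rcases hz with rfl | rfl | rfl <;> simp [Finset.mem_filter]
          · exact hDsym x
          · exact h.symm
        have hc3 : ({x, -1 - x, y} : Finset F).card = 3 := by
          rw [Finset.card_insert_of_notMem (by simp [hxf, Ne.symm hyx]),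
            Finset.card_insert_of_notMem (by simp [Ne.symm hyx']), Finset.card_singleton]
        have := Finset.card_le_card hsub
        have := hD2 (D x)
        omega
    · rintro (rfl | rfl)
      · rfl
      · exact (hDsym x).symm
  -- total sum over b of BCT
  set T : Finset (F × F) := univ.filter (fun z : F × F => D z.1 = D z.2) with hTdef
  have hsum1 : ∑ b : F, BCT f 1 b = T.card := by
    rw [hTdef, Finset.card_filter]
    unfold BCT
    simp only [Finset.card_filter]
    rw [Finset.sum_comm]
    apply Finset.sum_congr rfl
    intro z _
    by_cases h : D z.1 = D z.2
    · have heq : ∀ b : F, (f z.1 - f z.2 = b ∧ f (z.1 + 1) - f (z.2 + 1) = b) ↔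
          b = f z.1 - f z.2 := by
        intro b
        constructor
        · rintro ⟨h1, _⟩; exact h1.symm
        · rintro rfl
          refine ⟨rfl, ?_⟩
          simp only [hD] at h
          linear_combination h
      simp only [heq]
      rw [Finset.sum_ite_eq' univ (f z.1 - f z.2) (fun _ => 1), if_pos (Finset.mem_univ _),
        if_pos h]
    · rw [if_neg h]
      apply Finset.sum_eq_zero
      intro b _
      rw [if_neg]
      rintro ⟨h1, h2⟩
      apply h
      simp only [hD]
      linear_combination h2 - h1
  have hTcard : T.card + 1 = 2 * p ^ n := by
    have hT' : T = univ.filter (fun z : F × F => z.2 = z.1 ∨ z.2 = -1 - z.1) := by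
      rw [hTdef]
      apply Finset.filter_congr
      intro z _
      exact hT z.1 z.2
    rw [hT', Finset.card_filter, Fintype.sum_prod_type]
    have hstep : ∀ x : F, (∑ y : F, if (y = x ∨ y = -1 - x) then (1:ℕ) else 0)
        = if x = -1 - x then 1 else 2 := by
      intro x
      rw [← Finset.card_filter]
      by_cases hx : x = -1 - x
      · rw [if_pos hx]
        have : (univ.filter fun y : F => y = x ∨ y = -1 - x) = {x} := by
          ext y; simp [← hx]
        rw [this, Finset.card_singleton]
      · rw [if_neg hx]
        have : (univ.filter fun y : F => y = x ∨ y = -1 - x) = {x, -1 - x} := by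
          ext y; simp
        rw [this, Finset.card_pair hx]
    simp only [hstep]
    have hsplit : (∑ x : F, if x = -1 - x then (1:ℕ) else 2)
        + (∑ x : F, if x = -1 - x then (1:ℕ) else 0) = ∑ x : F, 2 := by
      rw [← Finset.sum_add_distrib]
      apply Finset.sum_congr rfl
      intro x _
      by_cases hx : x = -1 - x
      · rw [if_pos hx, if_pos hx]
      · rw [if_neg hx, if_neg hx]
    have hone : (∑ x : F, if x = -1 - x then (1:ℕ) else 0) = 1 := by
      rw [← Finset.card_filter]
      have : (univ.filter fun x : F => x = -1 - x) = {x0} := by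
        ext x; simp [hfix x]
      rw [this, Finset.card_singleton]
    rw [hone] at hsplit
    rw [hsplit]
    simp [hcard, mul_comm]
  -- the b = 0 term
  set C : F → Prop := fun x => f (x + 1) + f x = 0 with hCdef
  have hx0C : C x0 := by
    have hx01 : x0 + 1 = 2⁻¹ := by
      rw [hx0]; field_simp
      norm_num
    rw [hCdef]
    simp only
    rw [hx01, hx0, hfodd]
    ring
  have hmC : cDDT f (-1) 1 0 = (univ.filter fun x : F => C x).card := by
    unfold cDDT
    congr 1
    apply Finset.filter_congr
    intro x _
    rw [hCdef]
    constructor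
    · intro h; linear_combination h
    · intro h; linear_combination h
  set m := cDDT f (-1) 1 0 with hm
  have hBCT0 : BCT f 1 0 + 1 = p ^ n + m := by
    have hchar : ∀ x y : F, (f x - f y = 0 ∧ f (x + 1) - f (y + 1) = 0)
        ↔ (y = x ∨ (y = -1 - x ∧ C x)) := by
      intro x y
      constructor
      · rintro ⟨h1, h2⟩
        have hd : D x = D y := by simp only [hD]; linear_combination h2 - h1
        rcases (hT x y).mp hd with rfl | rfl
        · exact Or.inl rfl
        · refine Or.inr ⟨rfl, ?_⟩
          rw [hCdef]
          have hy : f (-1 - x) = -f (x + 1) := by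
            rw [show (-1 : F) - x = -(x + 1) by ring, hfodd]
          rw [hy] at h1
          linear_combination h1
      · rintro (rfl | ⟨rfl, hC⟩)
        · exact ⟨by ring, by ring⟩
        · rw [hCdef] at hC
          have hy : f (-1 - x) = -f (x + 1) := by
            rw [show (-1 : F) - x = -(x + 1) by ring, hfodd]
          have hy1 : f (-1 - x + 1) = -f x := by
            rw [show (-1 : F) - x + 1 = -x by ring, hfodd]
          constructor
          · rw [hy]; linear_combination hC
          · rw [hy1]; linear_combination hC
    have hB : BCT f 1 0 = ∑ x : F, (1 + if (C x ∧ ¬ x = -1 - x) then 1 else 0) := by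
      unfold BCT
      rw [Finset.card_filter, Fintype.sum_prod_type]
      apply Finset.sum_congr rfl
      intro x _
      simp only [hchar]
      rw [← Finset.card_filter]
      by_cases hC : C x
      · by_cases hx : x = -1 - x
        · have hflt : (univ.filter fun y : F => y = x ∨ (y = -1 - x ∧ C x)) = {x} := by
            ext y
            simp only [Finset.mem_filter, Finset.mem_univ, true_and, Finset.mem_singleton, ← hx]
            tauto
          rw [hflt, Finset.card_singleton, if_neg (by tauto)]
        · have hflt : (univ.filter fun y : F => y = x ∨ (y = -1 - x ∧ C x)) = {x, -1 - x} := by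
            ext y
            simp only [Finset.mem_filter, Finset.mem_univ, true_and, Finset.mem_insert,
              Finset.mem_singleton]
            tauto
          rw [hflt, Finset.card_pair hx, if_pos ⟨hC, hx⟩]
      · have hflt : (univ.filter fun y : F => y = x ∨ (y = -1 - x ∧ C x)) = {x} := by
          ext y
          simp only [Finset.mem_filter, Finset.mem_univ, true_and, Finset.mem_singleton]
          tauto
        rw [hflt, Finset.card_singleton, if_neg (by tauto)]
    rw [hB, Finset.sum_add_distrib, ← Finset.card_filter]
    have hsplit := Finset.card_filter_add_card_filter_not
      (s := univ.filter fun x : F => C x) (fun x : F => x = -1 - x)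
    rw [Finset.filter_filter, Finset.filter_filter] at hsplit
    have hfeq : (univ.filter fun x : F => C x ∧ x = -1 - x) = {x0} := by
      ext x
      simp only [Finset.mem_filter, Finset.mem_univ, true_and, Finset.mem_singleton, hfix x]
      constructor
      · rintro ⟨_, h⟩; exact h
      · rintro rfl; exact ⟨hx0C, rfl⟩
    rw [hfeq, Finset.card_singleton] at hsplit
    have hcnt : (univ.filter fun x : F => ¬ x = -1 - x ∧ C x).card
        = (univ.filter fun x : F => C x ∧ ¬ x = -1 - x).card := by
      congr 1
      apply Finset.filter_congr
      intro x _
      tauto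
    have : (univ.filter fun x : F => C x ∧ ¬ x = -1 - x).card + 1 = m := by
      rw [hmC]
      omega
    simp only [Finset.sum_const, Finset.card_univ, smul_eq_mul, mul_one, hcard]
    omega
  -- bound on BCT for nonzero b
  have hBle : ∀ b : F, b ≠ 0 → BCT f 1 b ≤ BU f := by
    intro b hb
    have hmem : ((1, b) : F × F) ∈ univ.filter (fun ab : F × F => ab.1 ≠ 0 ∧ ab.2 ≠ 0) := by
      simp [hb]
    exact Finset.le_sup (f := fun ab : F × F => BCT f ab.1 ab.2) hmem
  -- S = sum over nonzero b
  set S := ∑ b ∈ univ.filter (fun b : F => ¬ b = 0), BCT f 1 b with hS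
  have hSm : S + m = p ^ n := by
    have hsplit := Finset.sum_filter_add_sum_filter_not univ (fun b : F => b = 0)
      (fun b => BCT f 1 b)
    have h0f : (univ.filter fun b : F => b = 0) = {(0 : F)} := by
      ext b; simp
    rw [h0f, Finset.sum_singleton] at hsplit
    rw [hsum1] at hsplit
    omega
  have hq1 : 1 ≤ p ^ n := Nat.one_le_pow _ _ hp.pos
  constructor
  · -- first identity
    have : ∑ i ∈ Finset.range (BU f + 1), vSpec f i
        = ∑ b : F, if ¬ b = 0 then 1 else 0 := by
      unfold vSpec
      simp only [Finset.card_filter]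
      rw [Finset.sum_comm]
      apply Finset.sum_congr rfl
      intro b _
      by_cases hb : b = 0
      · simp [hb]
      · have : ∀ i, ((b ≠ 0 ∧ BCT f 1 b = i)) ↔ BCT f 1 b = i := by
          intro i; simp [hb]
        simp only [this]
        rw [if_pos hb, ← Finset.card_filter]
        have : (Finset.range (BU f + 1)).filter (fun i => BCT f 1 b = i) = {BCT f 1 b} := by
          ext i
          simp only [Finset.mem_filter, Finset.mem_range, Finset.mem_singleton]
          constructor
          · rintro ⟨_, h⟩; exact h.symm
          · rintro rfl
            exact ⟨Nat.lt_succ_of_le (hBle b hb), rfl⟩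
        rw [this, Finset.card_singleton]
    rw [this, ← Finset.card_filter, Finset.filter_ne' univ (0 : F)]
    rw [Finset.card_erase_of_mem (Finset.mem_univ _), Finset.card_univ, hcard]
  · -- second identity
    have hkey : ∑ i ∈ Finset.range (BU f + 1), i * vSpec f i = S := by
      have hstep : ∀ i, i * vSpec f i
          = ∑ b : F, if (b ≠ 0 ∧ BCT f 1 b = i) then i else 0 := by
        intro i
        unfold vSpec
        rw [Finset.card_filter, Finset.mul_sum]
        apply Finset.sum_congr rfl
        intro b _
        by_cases hb : b ≠ 0 ∧ BCT f 1 b = i <;> simp [hb]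
      simp only [hstep]
      rw [Finset.sum_comm, hS, Finset.sum_filter]
      apply Finset.sum_congr rfl
      intro b _
      by_cases hb : b = 0
      · simp [hb]
      · rw [if_pos hb]
        have : ∀ i, ((b ≠ 0 ∧ BCT f 1 b = i)) ↔ BCT f 1 b = i := by
          intro i; simp [hb]
        simp only [this]
        have hfr : (Finset.range (BU f + 1)).filter (fun i => BCT f 1 b = i) = {BCT f 1 b} := by
          ext i
          simp only [Finset.mem_filter, Finset.mem_range, Finset.mem_singleton]
          constructor
          · rintro ⟨_, h⟩; exact h.symm
          · rintro rfl
            exact ⟨Nat.lt_succ_of_le (hBle b hb), rfl⟩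
        calc ∑ i ∈ Finset.range (BU f + 1), (if BCT f 1 b = i then i else 0)
            = ∑ i ∈ (Finset.range (BU f + 1)).filter (fun i => BCT f 1 b = i), i := by
              rw [Finset.sum_filter]
          _ = BCT f 1 b := by rw [hfr, Finset.sum_singleton]
    rw [hkey]
    omega
end

section
/- Let p be an odd prime, n ≥ 1, f(X) = X^{p^n−2} on F_{p^n}, and let c ∈ F_{p^n} \ {0,1} be such that χ(c²−4c) = 1 or χ(1−4c) = 1. Then the c-differential uniformity of f is cΔ_f = 3. -/
open Finset

lemma quad_card {F : Type*} [Field F] [Fintype F] [DecidableEq F] (A B C : F) (hA : A ≠ 0) :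
    (Finset.univ.filter (fun x : F => A*x^2 + B*x + C = 0)).card ≤ 2 := by
  classical
  set P : Polynomial F := Polynomial.C A * Polynomial.X^2 + Polynomial.C B * Polynomial.X
    + Polynomial.C C with hP
  have hdeg : P.natDegree = 2 := Polynomial.natDegree_quadratic hA
  have hPne : P ≠ 0 := by intro h; rw [h] at hdeg; simp at hdeg
  have hsub : (Finset.univ.filter (fun x : F => A*x^2 + B*x + C = 0)) ⊆ P.roots.toFinset := by
    intro x hx
    simp only [Finset.mem_filter] at hx
    rw [Multiset.mem_toFinset, Polynomial.mem_roots hPne]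
    simp [Polynomial.IsRoot, hP, hx.2]
  calc (Finset.univ.filter (fun x : F => A*x^2 + B*x + C = 0)).card
      ≤ P.roots.toFinset.card := Finset.card_le_card hsub
    _ ≤ Multiset.card P.roots := Multiset.toFinset_card_le _
    _ ≤ P.natDegree := Polynomial.card_roots' P
    _ = 2 := hdeg


lemma chi_sq {F : Type*} [Field F] (d : F) (h : chi d = 1) :
    ∃ s : F, s ≠ 0 ∧ s * s = d := by
  unfold chi at h
  split_ifs at h with h1 h2
  · exact absurd h (by norm_num)
  · obtain ⟨s, hs⟩ := h2
    exact ⟨s, fun h0 => h1 (by simp [hs, h0]), hs.symm⟩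

theorem cdu_inverse_eq_three (p n : ℕ) (hp : p.Prime) (hpodd : Odd p) (hn : 1 ≤ n)
    {F : Type*} [Field F] [Fintype F] [DecidableEq F]
    (hF : Fintype.card F = p ^ n)
    (c : F) (hc0 : c ≠ 0) (hc1 : c ≠ 1)
    (hchi : chi (c ^ 2 - 4 * c) = 1 ∨ chi (1 - 4 * c) = 1) :
    cDU (fun x : F => x ^ (p ^ n - 2)) c = 3 := by
  simp only [cDU, cDDT]
  classical
  have hpne2 : p ≠ 2 := by rintro rfl; exact (Nat.not_odd_iff_even.mpr (by norm_num)) hpodd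
  have hp3 : 3 ≤ p := by have := hp.two_le; omega
  have hq3 : 3 ≤ p ^ n := le_trans hp3 (Nat.le_self_pow (by omega) p)
  have hchar : CharP F p := by
    have hrc : CharP F (ringChar F) := ringChar.charP F
    obtain ⟨m, hrp, hm⟩ := FiniteField.card F (ringChar F)
    have hdvd : p ∣ ringChar F ^ (m : ℕ) := by
      rw [← hm, hF]; exact dvd_pow_self p (by omega)
    have : p = ringChar F := ((Nat.prime_dvd_prime_iff_eq hp hrp).mp (hp.dvd_of_dvd_pow hdvd))
    rw [this]; exact hrc
  have h2 : (2 : F) ≠ 0 := by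
    intro h
    have : ((2 : ℕ) : F) = 0 := by norm_num at h ⊢; exact h
    rw [CharP.cast_eq_zero_iff F p] at this
    have := Nat.le_of_dvd (by norm_num) this
    omega
  have h4 : (4 : F) ≠ 0 := by
    have : (4 : F) = 2 * 2 := by norm_num
    rw [this]; exact mul_ne_zero h2 h2
  have hinv : ∀ x : F, x ^ (p ^ n - 2) = x⁻¹ := by
    intro x
    by_cases hx : x = 0
    · rw [hx, zero_pow (by omega), inv_zero]
    · have h1 : x ^ (p ^ n - 1) = 1 := by
        rw [← hF]; exact FiniteField.pow_card_sub_one_eq_one x hx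
      have h2' : x ^ (p ^ n - 2) * x = 1 := by
        rw [← pow_succ]
        have : p ^ n - 2 + 1 = p ^ n - 1 := by omega
        rw [this, h1]
      exact eq_inv_of_mul_eq_one_left h2'
  simp only [hinv]
  -- upper bound on each DDT entry
  have hub : ∀ a b : F,
      (Finset.univ.filter (fun x : F => (x + a)⁻¹ - c * x⁻¹ = b)).card ≤ 3 := by
    intro a b
    by_cases ha : a = 0
    · subst ha
      have hsub : (Finset.univ.filter (fun x : F => (x + 0)⁻¹ - c * x⁻¹ = b))
          ⊆ {0, (1 - c) * b⁻¹} := by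
        intro x hx
        simp only [Finset.mem_filter, add_zero] at hx
        by_cases hx0 : x = 0
        · simp [hx0]
        · have heq : (1 - c) * x⁻¹ = b := by rw [← hx.2]; ring
          have hb : b ≠ 0 := by
            intro hb0; rw [hb0, mul_eq_zero] at heq
            rcases heq with h | h
            · exact hc1 (by linear_combination -h)
            · exact hx0 (inv_eq_zero.mp h)
          have : x = (1 - c) * b⁻¹ := by
            field_simp at heq ⊢
            linear_combination -heq
          simp [this]
      calc _ ≤ ({0, (1 - c) * b⁻¹} : Finset F).card := Finset.card_le_card hsub
        _ ≤ 2 := Finset.card_insert_le _ _ |>.trans (by simp)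
        _ ≤ 3 := by omega
    · by_cases hb : b = 0
      · have h1c : (1 : F) - c ≠ 0 := fun h => hc1 (by linear_combination -h)
        have hsub : (Finset.univ.filter (fun x : F => (x + a)⁻¹ - c * x⁻¹ = b))
            ⊆ {c * a * (1 - c)⁻¹} := by
          intro x hx
          simp only [Finset.mem_filter] at hx
          have hx0 : x ≠ 0 := by
            rintro rfl
            rw [hb] at hx
            simp only [zero_add, inv_zero, mul_zero, sub_zero] at hx
            exact ha (inv_eq_zero.mp hx.2)
          have hxa : x + a ≠ 0 := by
            intro h
            rw [hb] at hx
            rw [h, inv_zero] at hx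
            have := hx.2
            simp only [zero_sub, neg_eq_zero, mul_eq_zero] at this
            rcases this with h' | h'
            · exact hc0 h'
            · exact hx0 (inv_eq_zero.mp h')
          have heq := hx.2
          rw [hb] at heq
          have hinv1 : (x + a)⁻¹ * (x + a) = 1 := inv_mul_cancel₀ hxa
          have hinv2 : x⁻¹ * x = 1 := inv_mul_cancel₀ hx0
          have heq' : x - c * (x + a) = 0 := by
            linear_combination x*(x+a)*heq - x*hinv1 + c*(x+a)*hinv2
          have : x = c * a * (1 - c)⁻¹ := by
            rw [eq_mul_inv_iff_mul_eq₀ h1c]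
            linear_combination heq'
          simp [this]
        calc _ ≤ ({c * a * (1 - c)⁻¹} : Finset F).card := Finset.card_le_card hsub
          _ ≤ 3 := by simp
      · set S := Finset.univ.filter (fun x : F => (x + a)⁻¹ - c * x⁻¹ = b) with hS
        have hsplit : (S \ {0, -a}).card + (S ∩ {0, -a}).card = S.card :=
          Finset.card_sdiff_add_card_inter S {0, -a}
        have h1 : (S \ {0, -a}).card ≤ 2 := by
          have hsub : S \ {0, -a} ⊆
              Finset.univ.filter (fun x : F => b*x^2 + (a*b + c - 1)*x + c*a = 0) := by
            intro x hx
            rw [Finset.mem_sdiff] at hx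
            obtain ⟨hxS, hxp⟩ := hx
            simp only [Finset.mem_insert, Finset.mem_singleton, not_or] at hxp
            obtain ⟨hx0, hxa'⟩ := hxp
            have hxa : x + a ≠ 0 := fun h => hxa' (by linear_combination h)
            rw [hS, Finset.mem_filter] at hxS
            have heq := hxS.2
            simp only [Finset.mem_filter, Finset.mem_univ, true_and]
            field_simp at heq
            linear_combination -heq
          exact le_trans (Finset.card_le_card hsub) (quad_card b _ _ hb)
        have h2' : (S ∩ {0, -a}).card ≤ 1 := by
          rw [Finset.card_le_one]
          have hno : ¬((0 : F) ∈ S ∧ -a ∈ S) := by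
            rintro ⟨hm0, hma⟩
            rw [hS, Finset.mem_filter] at hm0 hma
            have e0 : a⁻¹ = b := by
              have := hm0.2; simpa using this
            have ea : c * a⁻¹ = b := by
              have := hma.2
              rw [neg_add_cancel, inv_zero, inv_neg] at this
              linear_combination this
            have hkey : (c - 1) * a⁻¹ = 0 := by linear_combination ea - e0
            rcases mul_eq_zero.mp hkey with h' | h'
            · exact hc1 (by linear_combination h')
            · exact ha (inv_eq_zero.mp h')
          intro x hx y hy
          rw [Finset.mem_inter] at hx hy
          obtain ⟨hxS, hxp⟩ := hx
          obtain ⟨hyS, hyp⟩ := hy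
          simp only [Finset.mem_insert, Finset.mem_singleton] at hxp hyp
          rcases hxp with rfl | rfl <;> rcases hyp with rfl | rfl
          · rfl
          · exact absurd ⟨hxS, hyS⟩ hno
          · exact absurd ⟨hyS, hxS⟩ hno
          · rfl
        omega
  apply Nat.le_antisymm
  · exact Finset.sup_le fun ab _ => hub ab.1 ab.2
  · have hlow : ∀ b x0 x1 x2 : F, x0 ≠ x1 → x0 ≠ x2 → x1 ≠ x2 →
        ((x0 + 1)⁻¹ - c * x0⁻¹ = b) → ((x1 + 1)⁻¹ - c * x1⁻¹ = b) →
        ((x2 + 1)⁻¹ - c * x2⁻¹ = b) →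
        3 ≤ (Finset.univ.filter (fun ab : F × F => c = 1 → ab.1 ≠ 0)).sup
          (fun ab => (Finset.univ.filter
            (fun x : F => (x + ab.1)⁻¹ - c * x⁻¹ = ab.2)).card) := by
      intro b x0 x1 x2 h01 h02 h12 e0 e1 e2
      have hmem : ((1 : F), b) ∈ Finset.univ.filter (fun ab : F × F => c = 1 → ab.1 ≠ 0) :=
        Finset.mem_filter.mpr ⟨Finset.mem_univ _, fun h => absurd h hc1⟩
      refine le_trans ?_ (Finset.le_sup hmem)
      have hsub : ({x0, x1, x2} : Finset F) ⊆
          Finset.univ.filter (fun x : F => (x + 1)⁻¹ - c * x⁻¹ = b) := by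
        intro x hx
        simp only [Finset.mem_insert, Finset.mem_singleton] at hx
        rcases hx with rfl | rfl | rfl <;>
          exact Finset.mem_filter.mpr ⟨Finset.mem_univ _, by assumption⟩
      have hcard : ({x0, x1, x2} : Finset F).card = 3 := by
        rw [Finset.card_insert_of_notMem (by simp [h01, h02]),
          Finset.card_insert_of_notMem (by simp [h12]), Finset.card_singleton]
      calc (3 : ℕ) = ({x0, x1, x2} : Finset F).card := hcard.symm
        _ ≤ _ := Finset.card_le_card hsub
    rcases hchi with hchi | hchi
    · obtain ⟨s, hs0, hs⟩ := chi_sq _ hchi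
      set r1 := (-c + s) * (2 : F)⁻¹ with hr1
      set r2 := (-c - s) * (2 : F)⁻¹ with hr2
      have h2r1 : (2 : F) * r1 = -c + s := by
        rw [hr1, mul_comm, inv_mul_cancel_right₀ h2]
      have h2r2 : (2 : F) * r2 = -c - s := by
        rw [hr2, mul_comm, inv_mul_cancel_right₀ h2]
      have hq1 : r1 * r1 + c * r1 + c = 0 := by
        have hh : (4 : F) * (r1 * r1 + c * r1 + c) = 0 := by
          linear_combination (2*r1 + c + s) * h2r1 + hs
        exact (mul_eq_zero.mp hh).resolve_left h4
      have hq2 : r2 * r2 + c * r2 + c = 0 := by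
        have hh : (4 : F) * (r2 * r2 + c * r2 + c) = 0 := by
          linear_combination (2*r2 + c - s) * h2r2 + hs
        exact (mul_eq_zero.mp hh).resolve_left h4
      have hroot : ∀ r : F, r * r + c * r + c = 0 → (r + 1)⁻¹ - c * r⁻¹ = 1 := by
        intro r hr
        have hrne0 : r ≠ 0 := by rintro rfl; simp at hr; exact hc0 hr
        have hrne1 : r + 1 ≠ 0 := by
          intro h
          have hr' : r = -1 := by linear_combination h
          rw [hr'] at hr
          exact one_ne_zero (by linear_combination hr)
        field_simp
        linear_combination -hr
      have h12 : r1 ≠ r2 := by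
        intro h
        apply hs0
        have hss : (2 : F) * s = 0 := by linear_combination 2*h - h2r1 + h2r2
        exact (mul_eq_zero.mp hss).resolve_left h2
      have h01 : (0 : F) ≠ r1 := by
        rintro h; rw [← h] at hq1; simp at hq1; exact hc0 hq1
      have h02 : (0 : F) ≠ r2 := by
        rintro h; rw [← h] at hq2; simp at hq2; exact hc0 hq2
      exact hlow 1 0 r1 r2 h01 h02 h12 (by simp) (hroot r1 hq1) (hroot r2 hq2)
    · obtain ⟨s, hs0, hs⟩ := chi_sq _ hchi
      have h2c : (2 : F) * c ≠ 0 := mul_ne_zero h2 hc0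
      have h4c : (4 : F) * c ≠ 0 := mul_ne_zero h4 hc0
      set r1 := (1 - 2*c + s) * (2*c)⁻¹ with hr1
      set r2 := (1 - 2*c - s) * (2*c)⁻¹ with hr2
      have h2r1 : (2 * c) * r1 = 1 - 2*c + s := by
        rw [hr1, mul_comm, inv_mul_cancel_right₀ h2c]
      have h2r2 : (2 * c) * r2 = 1 - 2*c - s := by
        rw [hr2, mul_comm, inv_mul_cancel_right₀ h2c]
      have hq1 : c * (r1 * r1) + (2*c - 1) * r1 + c = 0 := by
        have hh : ((4 : F) * c) * (c * (r1 * r1) + (2*c - 1) * r1 + c) = 0 := by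
          linear_combination (2*c*r1 - 1 + 2*c + s) * h2r1 + hs
        exact (mul_eq_zero.mp hh).resolve_left h4c
      have hq2 : c * (r2 * r2) + (2*c - 1) * r2 + c = 0 := by
        have hh : ((4 : F) * c) * (c * (r2 * r2) + (2*c - 1) * r2 + c) = 0 := by
          linear_combination (2*c*r2 - 1 + 2*c - s) * h2r2 + hs
        exact (mul_eq_zero.mp hh).resolve_left h4c
      have hroot : ∀ r : F, c * (r * r) + (2*c - 1) * r + c = 0 → (r + 1)⁻¹ - c * r⁻¹ = c := by
        intro r hr
        have hrne0 : r ≠ 0 := by rintro rfl; simp at hr; exact hc0 hr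
        have hrne1 : r + 1 ≠ 0 := by
          intro h
          have hr' : r = -1 := by linear_combination h
          rw [hr'] at hr
          exact one_ne_zero (by linear_combination hr)
        field_simp
        linear_combination -hr
      have h12 : r1 ≠ r2 := by
        intro h
        apply hs0
        have hss : (2 : F) * s = 0 := by linear_combination 2*c*h - h2r1 + h2r2
        exact (mul_eq_zero.mp hss).resolve_left h2
      have hm1 : (-1 : F) ≠ r1 := by
        intro h
        rw [← h] at hq1
        exact one_ne_zero (by linear_combination hq1)
      have hm2 : (-1 : F) ≠ r2 := by
        intro h
        rw [← h] at hq2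
        exact one_ne_zero (by linear_combination hq2)
      have em1 : ((-1 : F) + 1)⁻¹ - c * (-1 : F)⁻¹ = c := by
        rw [neg_add_cancel, inv_zero, inv_neg, inv_one, mul_neg_one, zero_sub, neg_neg]
      exact hlow c (-1) r1 r2 hm1 hm2 h12 em1 (hroot r1 hq1) (hroot r2 hq2)
end

section
/- Let n ≥ 1 and let f(X) = X^{3^n−2} be the inverse function on F_{3^n}. Then the (classical) differential uniformity of f is Δ_f = 3. -/
open Finset

lemma inv_diff_eq_iff' {F : Type*} [Field F] (h3 : (3:F) = 0) (a x : F) (ha : a ≠ 0) :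
    (x + a)⁻¹ - 1 * x⁻¹ = a⁻¹ ↔ x = 0 ∨ x = a ∨ x = -a := by
  rw [one_mul]
  have h2a : a + a ≠ 0 := by
    intro hc; apply ha; linear_combination a * h3 - hc
  constructor
  · intro h
    rcases eq_or_ne x 0 with rfl | hx0
    · exact Or.inl rfl
    rcases eq_or_ne x (-a) with rfl | hxa
    · exact Or.inr (Or.inr rfl)
    have hxa' : x + a ≠ 0 := fun hc => hxa (by linear_combination hc)
    right; left
    field_simp at h
    have h2 : (x - a) ^ 2 = 0 := by linear_combination -h - a * x * h3
    have := pow_eq_zero_iff (n := 2) (by norm_num) |>.mp h2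
    linear_combination this
  · rintro (rfl | h | rfl)
    · simp
    · rw [h, show a + a = -a by linear_combination a * h3]
      rw [inv_neg]
      field_simp
      linear_combination -h3
    · simp [inv_neg]

lemma key_filter_eq' {F : Type*} [Field F] [Fintype F] [DecidableEq F]
    (h3 : (3:F) = 0) (a : F) (ha : a ≠ 0) :
    (Finset.univ.filter (fun x : F => (x + a)⁻¹ - 1 * x⁻¹ = a⁻¹)) = {0, a, -a} := by
  ext x
  simp only [Finset.mem_filter, Finset.mem_univ, true_and,
    inv_diff_eq_iff' h3 a x ha, Finset.mem_insert, Finset.mem_singleton]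

lemma card_three' {F : Type*} [Field F] [Fintype F] [DecidableEq F]
    (h3 : (3:F) = 0) (a : F) (ha : a ≠ 0) :
    ({0, a, -a} : Finset F).card = 3 := by
  have h1 : a ≠ -a := by
    intro hc; apply ha; linear_combination a * h3 - hc
  have h0 : (0:F) ∉ ({a, -a} : Finset F) := by
    simp only [Finset.mem_insert, Finset.mem_singleton]
    push_neg
    exact ⟨fun h => ha h.symm, fun h => ha (neg_eq_zero.mp h.symm)⟩
  rw [Finset.card_insert_of_notMem h0,
    Finset.card_insert_of_notMem (by simp [h1]), Finset.card_singleton]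

lemma count_le' {F : Type*} [Field F] [Fintype F] [DecidableEq F]
    (h3 : (3:F) = 0) (a b : F) (ha : a ≠ 0) :
    (Finset.univ.filter (fun x : F => (x + a)⁻¹ - 1 * x⁻¹ = b)).card ≤ 3 := by
  rcases eq_or_ne b a⁻¹ with rfl | hb
  · rw [key_filter_eq' h3 a ha, card_three' h3 a ha]
  · set p : Polynomial F := Polynomial.C b * Polynomial.X ^ 2 + Polynomial.C (a * b) * Polynomial.X
      + Polynomial.C a with hp
    have hp0 : p ≠ 0 := by
      intro hc
      apply ha
      have := congrArg (Polynomial.eval 0) hc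
      simpa [hp] using this
    have hsub : (Finset.univ.filter (fun x : F => (x + a)⁻¹ - 1 * x⁻¹ = b))
        ⊆ p.roots.toFinset := by
      intro x hx
      simp only [Finset.mem_filter, Finset.mem_univ, true_and, one_mul] at hx
      have hx0 : x ≠ 0 := by
        rintro rfl; apply hb; simpa using hx.symm
      have hxa : x + a ≠ 0 := by
        intro hc
        apply hb
        rw [hc, show x = -a by linear_combination hc, inv_neg, inv_zero] at hx
        linear_combination -hx
      rw [Multiset.mem_toFinset, Polynomial.mem_roots hp0]
      have : b * x ^ 2 + a * b * x + a = 0 := by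
        field_simp at hx
        linear_combination -hx
      simpa [Polynomial.IsRoot, hp] using this
    calc (Finset.univ.filter (fun x : F => (x + a)⁻¹ - 1 * x⁻¹ = b)).card
        ≤ p.roots.toFinset.card := Finset.card_le_card hsub
      _ ≤ Multiset.card p.roots := Multiset.toFinset_card_le _
      _ ≤ p.natDegree := Polynomial.card_roots' p
      _ ≤ 2 := by rw [hp]; exact Polynomial.natDegree_quadratic_le
      _ ≤ 3 := by norm_num

theorem du_inverse_char_three (n : ℕ) (hn : 1 ≤ n)
    {F : Type*} [Field F] [Fintype F] [DecidableEq F]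
    (hF : Fintype.card F = 3 ^ n) :
    DU (fun x : F => x ^ (3 ^ n - 2)) = 3 := by
  have hq : 3 ≤ 3 ^ n := by
    calc 3 = 3 ^ 1 := by norm_num
      _ ≤ 3 ^ n := Nat.pow_le_pow_right (by norm_num) hn
  have h3 : (3 : F) = 0 := by
    have := Nat.cast_card_eq_zero F
    rw [hF] at this
    push_cast at this
    exact pow_eq_zero_iff (by omega) |>.mp this
  have hfun : (fun x : F => x ^ (3 ^ n - 2)) = (fun x : F => x⁻¹) := by
    funext x
    rcases eq_or_ne x 0 with rfl | hx
    · rw [zero_pow (by omega), inv_zero]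
    · have h1 : x ^ (3 ^ n - 1) = 1 := by
        rw [← hF]; exact FiniteField.pow_card_sub_one_eq_one x hx
      have hmul : x ^ (3 ^ n - 2) * x = 1 := by
        rw [← pow_succ]; convert h1 using 2; omega
      exact (inv_eq_of_mul_eq_one_left hmul).symm
  rw [hfun]
  unfold DU cDU
  apply le_antisymm
  · apply Finset.sup_le
    intro ab hab
    simp only [Finset.mem_filter, Finset.mem_univ, true_and] at hab
    exact count_le' h3 ab.1 ab.2 (hab trivial)
  · have hmem : ((1 : F), (1 : F)) ∈
        Finset.univ.filter (fun ab : F × F => (1:F) = 1 → ab.1 ≠ 0) := by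
      simp
    have hkey : cDDT (fun x : F => x⁻¹) 1 1 1 = 3 := by
      unfold cDDT
      have h := key_filter_eq' h3 1 one_ne_zero
      rw [inv_one] at h
      rw [h, card_three' h3 1 one_ne_zero]
    calc 3 = cDDT (fun x : F => x⁻¹) 1 1 1 := hkey.symm
      _ ≤ _ := Finset.le_sup (f := fun ab : F × F => cDDT (fun x : F => x⁻¹) 1 ab.1 ab.2)
          (b := ((1:F), (1:F))) hmem
end

section
/- Let p > 3 be a prime, n ≥ 1, and let f(X) = X^{p^n−2} be the inverse function on F_{p^n}. Then the (classical) differential uniformity of f is Δ_f = 4 if χ(−3) = 1, and Δ_f = 2 (i.e., f is APN) if χ(−3) = −1. -/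
open Finset

section Helpers
set_option linter.unusedSectionVars false
open Polynomial
variable {F : Type*} [Field F] [Fintype F] [DecidableEq F]

lemma quad_card_le (A B C : F) (hA : A ≠ 0) :
    (Finset.univ.filter (fun x : F => A * x ^ 2 + B * x + C = 0)).card ≤ 2 := by
  classical
  set P : F[X] := Polynomial.C A * Polynomial.X ^ 2 + Polynomial.C B * Polynomial.X + Polynomial.C C with hPdef
  have hP : P.natDegree = 2 := Polynomial.natDegree_quadratic hA
  have hP0 : P ≠ 0 := by intro h; rw [h] at hP; simp at hP
  have hsub : (Finset.univ.filter (fun x : F => A * x ^ 2 + B * x + C = 0)) ⊆ P.roots.toFinset := by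
    intro x hx
    simp only [Finset.mem_filter] at hx
    rw [Multiset.mem_toFinset, Polynomial.mem_roots hP0]
    simp [hPdef, Polynomial.IsRoot, hx.2]
  calc (Finset.univ.filter (fun x : F => A * x ^ 2 + B * x + C = 0)).card
      ≤ P.roots.toFinset.card := Finset.card_le_card hsub
    _ ≤ Multiset.card P.roots := P.roots.toFinset_card_le
    _ ≤ P.natDegree := P.card_roots'
    _ = 2 := hP

lemma inv_eq_quad {a b x : F} (hx : x ≠ 0) (hxa : x + a ≠ 0)
    (h : (x + a)⁻¹ - x⁻¹ = b) : b * x ^ 2 + a * b * x + a = 0 := by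
  field_simp at h
  linear_combination -h

lemma cDDT_zero {a : F} (ha : a ≠ 0) : cDDT (fun x : F => x⁻¹) 1 a 0 = 0 := by
  rw [cDDT, Finset.card_eq_zero, Finset.filter_eq_empty_iff]
  intro x _
  simp only [one_mul]
  rcases eq_or_ne x 0 with rfl | hx
  · simpa using inv_ne_zero ha
  rcases eq_or_ne (x + a) 0 with hxa | hxa
  · rw [hxa]; simpa using inv_ne_zero hx
  · intro h
    have := inv_eq_quad hx hxa h
    simp only [zero_mul, mul_zero, zero_add] at this
    exact ha this

lemma cDDT_le_four {a b : F} (ha : a ≠ 0) :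
    cDDT (fun x : F => x⁻¹) 1 a b ≤ 4 := by
  rcases eq_or_ne b 0 with rfl | hb
  · rw [cDDT_zero ha]; norm_num
  rw [cDDT]
  have hsub : (Finset.univ.filter (fun x : F => (x + a)⁻¹ - 1 * x⁻¹ = b)) ⊆
      insert 0 (insert (-a) (Finset.univ.filter (fun x : F => b * x ^ 2 + a * b * x + a = 0))) := by
    intro x hx
    simp only [Finset.mem_filter, one_mul] at hx
    simp only [Finset.mem_insert, Finset.mem_filter, Finset.mem_univ, true_and]
    rcases eq_or_ne x 0 with rfl | hx0
    · exact Or.inl rfl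
    rcases eq_or_ne (x + a) 0 with hxa | hxa
    · exact Or.inr (Or.inl (eq_neg_of_add_eq_zero_left hxa))
    · exact Or.inr (Or.inr (inv_eq_quad hx0 hxa hx.2))
  refine (Finset.card_le_card hsub).trans ?_
  refine (Finset.card_insert_le _ _).trans ?_
  have := (Finset.card_insert_le (-a) (Finset.univ.filter (fun x : F => b * x ^ 2 + a * b * x + a = 0)))
  have h2 := quad_card_le b (a * b) a hb
  omega

lemma cDDT_le_two (hns : ¬ IsSquare (-3 : F)) {a b : F} (ha : a ≠ 0) :
    cDDT (fun x : F => x⁻¹) 1 a b ≤ 2 := by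
  rcases eq_or_ne b 0 with rfl | hb
  · rw [cDDT_zero ha]; norm_num
  rw [cDDT]
  rcases eq_or_ne b a⁻¹ with rfl | hba
  · -- solution set ⊆ {0, -a}
    have hsub : (Finset.univ.filter (fun x : F => (x + a)⁻¹ - 1 * x⁻¹ = a⁻¹)) ⊆ {0, -a} := by
      intro x hx
      simp only [Finset.mem_filter, one_mul] at hx
      simp only [Finset.mem_insert, Finset.mem_singleton]
      by_contra hcon
      push_neg at hcon
      obtain ⟨hx0, hxna⟩ := hcon
      have hxa : x + a ≠ 0 := fun h => hxna (by linear_combination h)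
      have hq := inv_eq_quad hx0 hxa hx.2
      have hq2 : x ^ 2 + a * x + a ^ 2 = 0 := by
        have h1 : a * (a⁻¹ * x ^ 2 + a * a⁻¹ * x + a) = a * 0 := by rw [hq]
        rw [mul_inv_cancel₀ ha] at h1
        field_simp at h1
        linear_combination h1
      refine hns ⟨(2 * x + a) / a, ?_⟩
      field_simp
      linear_combination -4 * hq2
    exact (Finset.card_le_card hsub).trans
      ((Finset.card_insert_le _ _).trans (by simp))
  · have hsub : (Finset.univ.filter (fun x : F => (x + a)⁻¹ - 1 * x⁻¹ = b)) ⊆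
        (Finset.univ.filter (fun x : F => b * x ^ 2 + a * b * x + a = 0)) := by
      intro x hx
      simp only [Finset.mem_filter, one_mul] at hx ⊢
      refine ⟨Finset.mem_univ x, ?_⟩
      have hx0 : x ≠ 0 := by
        rintro rfl
        simp only [zero_add, inv_zero, mul_zero, sub_zero] at hx
        exact hba hx.2.symm
      have hxa : x + a ≠ 0 := by
        intro h
        have hxe : x = -a := by linear_combination h
        rw [h, hxe, inv_zero, inv_neg] at hx
        exact hba (by linear_combination -hx.2)
      exact inv_eq_quad hx0 hxa hx.2
    exact (Finset.card_le_card hsub).trans (quad_card_le b (a * b) a hb)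

-- value when -3 is a nonzero square
lemma cDDT_one_one_sq (h2 : (2 : F) ≠ 0) (h3 : (-3 : F) ≠ 0)
    (hsq : IsSquare (-3 : F)) :
    cDDT (fun x : F => x⁻¹) 1 1 1 = 4 := by
  obtain ⟨s, hs⟩ := hsq
  have hs0 : s ≠ 0 := by rintro rfl; rw [mul_zero] at hs; exact h3 hs
  set r1 : F := (-1 + s) / 2 with hr1
  set r2 : F := (-1 - s) / 2 with hr2
  have hq1 : r1 ^ 2 + r1 + 1 = 0 := by
    rw [hr1]; field_simp; linear_combination -1 * hs
  have hq2 : r2 ^ 2 + r2 + 1 = 0 := by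
    rw [hr2]; field_simp; linear_combination -1 * hs
  have key : ∀ r : F, r ^ 2 + r + 1 = 0 → r ≠ 0 ∧ r + 1 ≠ 0 ∧ (r + 1)⁻¹ - r⁻¹ = 1 := by
    intro r hq
    have h0 : r ≠ 0 := by rintro rfl; simp at hq
    have h1 : r + 1 ≠ 0 := by
      intro h
      have : r = -1 := by linear_combination h
      rw [this] at hq; norm_num at hq
    refine ⟨h0, h1, ?_⟩
    field_simp
    linear_combination -hq
  have hset : (Finset.univ.filter (fun x : F => (x + 1)⁻¹ - 1 * x⁻¹ = 1)) =
      {0, -1, r1, r2} := by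
    ext x
    simp only [Finset.mem_filter, Finset.mem_univ, true_and, one_mul,
      Finset.mem_insert, Finset.mem_singleton]
    constructor
    · intro hx
      rcases eq_or_ne x 0 with rfl | hx0
      · exact Or.inl rfl
      rcases eq_or_ne (x + 1) 0 with hx1 | hx1
      · exact Or.inr (Or.inl (by linear_combination hx1))
      · have hq : x ^ 2 + x + 1 = 0 := by
          have h := hx
          field_simp at h
          linear_combination -h
        have : (x - r1) * (x - r2) = 0 := by
          rw [hr1, hr2]
          field_simp
          linear_combination 4 * hq + hs
        rcases mul_eq_zero.mp this with h | h
        · exact Or.inr (Or.inr (Or.inl (by linear_combination h)))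
        · exact Or.inr (Or.inr (Or.inr (by linear_combination h)))
    · rintro (rfl | rfl | rfl | rfl)
      · simp
      · norm_num
      · exact (key r1 hq1).2.2
      · exact (key r2 hq2).2.2
  rw [cDDT, hset]
  have k1 := key r1 hq1
  have k2 := key r2 hq2
  have hne : r1 ≠ r2 := by
    intro h
    have h' : (-1 + s : F) = -1 - s := by
      have hh := congrArg (fun t : F => t * 2) h
      simpa [hr1, hr2, div_mul_cancel₀ _ h2] using hh
    have h2s : (2 : F) * s = 0 := by linear_combination h'
    rcases mul_eq_zero.mp h2s with hc | hc
    · exact h2 hc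
    · exact hs0 hc
  have h01 : (0 : F) ≠ -1 := by
    intro h; apply h2; linear_combination 2 * h
  have h0r1 : (0 : F) ≠ r1 := fun h => k1.1 h.symm
  have h0r2 : (0 : F) ≠ r2 := fun h => k2.1 h.symm
  have h1r1 : (-1 : F) ≠ r1 := by
    intro h; exact k1.2.1 (by linear_combination -h)
  have h1r2 : (-1 : F) ≠ r2 := by
    intro h; exact k2.2.1 (by linear_combination -h)
  rw [Finset.card_insert_of_notMem (by simp [h01, h0r1, h0r2]),
    Finset.card_insert_of_notMem (by simp [h1r1, h1r2]),
    Finset.card_insert_of_notMem (by simp [hne]),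
    Finset.card_singleton]

lemma cDDT_one_one_nsq (hns : ¬ IsSquare (-3 : F)) :
    cDDT (fun x : F => x⁻¹) 1 1 1 = 2 := by
  have hset : (Finset.univ.filter (fun x : F => (x + 1)⁻¹ - 1 * x⁻¹ = 1)) =
      {0, -1} := by
    ext x
    simp only [Finset.mem_filter, Finset.mem_univ, true_and, one_mul,
      Finset.mem_insert, Finset.mem_singleton]
    constructor
    · intro hx
      by_contra hcon
      push_neg at hcon
      obtain ⟨hx0, hx1⟩ := hcon
      have hx1' : x + 1 ≠ 0 := fun h => hx1 (by linear_combination h)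
      have hq : x ^ 2 + x + 1 = 0 := by
        field_simp at hx
        linear_combination -hx
      exact hns ⟨2 * x + 1, by linear_combination -4 * hq⟩
    · rintro (rfl | rfl)
      · simp
      · norm_num
  rw [cDDT, hset]
  rw [Finset.card_insert_of_notMem (by simp), Finset.card_singleton]

end Helpers

theorem du_inverse (p n : ℕ) (hp : p.Prime) (hp3 : 3 < p) (hn : 1 ≤ n)
    {F : Type*} [Field F] [Fintype F] [DecidableEq F]
    (hF : Fintype.card F = p ^ n) :
    (chi (-3 : F) = 1 → DU (fun x : F => x ^ (p ^ n - 2)) = 4) ∧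
    (chi (-3 : F) = -1 → DU (fun x : F => x ^ (p ^ n - 2)) = 2) := by
  have hq4 : 4 ≤ p ^ n := le_trans (by omega) (Nat.le_self_pow (by omega) p)
  -- the function is the inverse function
  have hfun : (fun x : F => x ^ (p ^ n - 2)) = (fun x : F => x⁻¹) := by
    funext x
    rcases eq_or_ne x 0 with rfl | hx
    · rw [zero_pow (by omega), inv_zero]
    · have h1 : x ^ (Fintype.card F - 1) = 1 := FiniteField.pow_card_sub_one_eq_one x hx
      rw [hF] at h1
      have he : p ^ n - 2 + 1 = p ^ n - 1 := by omega
      have : x ^ (p ^ n - 2) * x = 1 := by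
        rw [← pow_succ, he, h1]
      field_simp at this ⊢
      linear_combination this
  -- characteristic facts
  have hchar : ringChar F = p := by
    have hc0 : ((p : ℕ) : F) = 0 := by
      have := FiniteField.cast_card_eq_zero F
      rw [hF] at this
      push_cast at this
      exact pow_eq_zero_iff (by omega) |>.mp this
    have hdvd : ringChar F ∣ p := ringChar.dvd hc0
    rcases (Nat.Prime.eq_one_or_self_of_dvd hp _ hdvd) with h | h
    · exact absurd h (CharP.ringChar_ne_one)
    · exact h
  have h2 : (2 : F) ≠ 0 := by
    intro h
    have : ((2 : ℕ) : F) = 0 := by push_cast; exact h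
    have := (CharP.cast_eq_zero_iff F (ringChar F) 2).mp this
    rw [hchar] at this
    have := Nat.le_of_dvd (by norm_num) this
    omega
  have h3 : (3 : F) ≠ 0 := by
    intro h
    have : ((3 : ℕ) : F) = 0 := by push_cast; exact h
    have := (CharP.cast_eq_zero_iff F (ringChar F) 3).mp this
    rw [hchar] at this
    have := Nat.le_of_dvd (by norm_num) this
    omega
  have hm3 : (-3 : F) ≠ 0 := by simpa using h3
  have h10 : (1 : F) ≠ 0 := one_ne_zero
  rw [hfun]
  constructor
  · intro hchi
    have hsq : IsSquare (-3 : F) := by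
      unfold chi at hchi
      split_ifs at hchi with hA hB
      all_goals simp_all
    rw [DU, cDU]
    apply le_antisymm
    · apply Finset.sup_le
      intro ab hab
      simp only [Finset.mem_filter] at hab
      exact cDDT_le_four (hab.2 trivial)
    · have hmem : ((1 : F), (1 : F)) ∈
          (Finset.univ.filter (fun ab : F × F => (1 : F) = 1 → ab.1 ≠ 0)) := by
        simp [h10]
      have := Finset.le_sup (f := fun ab : F × F => cDDT (fun x : F => x⁻¹) 1 ab.1 ab.2) hmem
      simpa only [cDDT_one_one_sq h2 hm3 hsq] using this
  · intro hchi
    have hns : ¬ IsSquare (-3 : F) := by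
      unfold chi at hchi
      split_ifs at hchi with hA hB
      all_goals simp_all
    rw [DU, cDU]
    apply le_antisymm
    · apply Finset.sup_le
      intro ab hab
      simp only [Finset.mem_filter] at hab
      exact cDDT_le_two hns (hab.2 trivial)
    · have hmem : ((1 : F), (1 : F)) ∈
          (Finset.univ.filter (fun ab : F × F => (1 : F) = 1 → ab.1 ≠ 0)) := by
        simp [h10]
      have := Finset.le_sup (f := fun ab : F × F => cDDT (fun x : F => x⁻¹) 1 ab.1 ab.2) hmem
      simpa only [cDDT_one_one_nsq hns] using this
end

section
/- Let p be an odd prime and n ≥ 1 with p^n ≡ 3 (mod 4) and χ(5) = 1, and let f(X) = X^{p^n−2} be the inverse function on F_{p^n}. Then the (−1)-differential spectrum of f satisfies ₋₁ω_0 = (p^n+1)/2, ₋₁ω_1 = 1, ₋₁ω_2 = (p^n−7)/2, ₋₁ω_3 = 2, and ₋₁ω_i = 0 for all i ≥ 4. -/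
open Finset

section AuxNeg
variable {F : Type*} [Field F] [Fintype F] [DecidableEq F]

lemma aux_quad_card (h2 : (2:F) ≠ 0) {a b c : F} (ha : a ≠ 0)
    (hd : discrim a b c ≠ 0) :
    (univ.filter (fun x : F => a*(x*x) + b*x + c = 0)).card
      = if IsSquare (discrim a b c) then 2 else 0 := by
  haveI : NeZero (2:F) := ⟨h2⟩
  by_cases hsq : IsSquare (discrim a b c)
  · obtain ⟨s, hs⟩ := hsq
    have hs0 : s ≠ 0 := fun h => hd (by rw [hs, h, mul_zero])
    have heq : univ.filter (fun x : F => a*(x*x)+b*x+c = 0)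
        = {(-b + s)/(2*a), (-b - s)/(2*a)} := by
      ext x
      simp only [mem_filter, mem_univ, true_and, mem_insert, mem_singleton]
      exact quadratic_eq_zero_iff ha hs x
    rw [heq, if_pos ⟨s, hs⟩, card_insert_of_notMem, card_singleton]
    simp only [mem_singleton]
    intro h
    have h2a : (2*a) ≠ 0 := mul_ne_zero h2 ha
    rw [div_eq_div_iff h2a h2a] at h
    apply hs0
    have hss : (2 * (2*a)) * s = 0 := by linear_combination h
    rcases mul_eq_zero.mp hss with h' | h'
    · exact absurd h' (mul_ne_zero h2 h2a)
    · exact h'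
  · rw [if_neg hsq, Finset.card_eq_zero, Finset.filter_eq_empty_iff]
    intro x _
    exact quadratic_ne_zero_of_discrim_ne_sq
      (fun s hcon => hsq ⟨s, by rw [hcon]; ring⟩) x

lemma aux_sol_iff {b : F} (x : F) :
    (x+1)⁻¹ + x⁻¹ = b ↔
      (x = 0 ∧ b = 1) ∨ (x = -1 ∧ b = -1) ∨ (b*(x*x) + (b-2)*x + (-1) = 0) := by
  by_cases hx0 : x = 0
  · subst hx0
    have hL : ((0:F)+1)⁻¹ + (0:F)⁻¹ = 1 := by norm_num
    constructor
    · intro h; exact Or.inl ⟨rfl, (hL.symm.trans h).symm⟩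
    · rintro (⟨_, rfl⟩ | ⟨h, _⟩ | h)
      · exact hL
      · exact absurd h (fun hc => (one_ne_zero : (1:F) ≠ 0) (by linear_combination hc))
      · exact absurd h (fun hc => (one_ne_zero : (1:F) ≠ 0) (by linear_combination -hc))
  · by_cases hx1 : x = -1
    · subst hx1
      have hL : ((-1:F)+1)⁻¹ + (-1:F)⁻¹ = -1 := by norm_num
      constructor
      · intro h; exact Or.inr (Or.inl ⟨rfl, (hL.symm.trans h).symm⟩)
      · rintro (⟨h, _⟩ | ⟨_, rfl⟩ | h)
        · exact absurd h (fun hc => (one_ne_zero : (1:F) ≠ 0) (by linear_combination -hc))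
        · exact hL
        · exact absurd h (fun hc => (one_ne_zero : (1:F) ≠ 0) (by linear_combination hc))
    · have hx1' : x + 1 ≠ 0 := fun h => hx1 (by linear_combination h)
      constructor
      · intro h
        right; right
        field_simp at h
        linear_combination -h
      · rintro (⟨h, _⟩ | ⟨h, _⟩ | h)
        · exact absurd h hx0
        · exact absurd h hx1
        · field_simp
          linear_combination -h

lemma aux_b4 (hm1 : ¬ IsSquare (-1:F)) (h2 : (2:F) ≠ 0) :
    ∀ t : F, t^2 + 4 ≠ 0 := by
  intro t h
  exact hm1 ⟨t * 2⁻¹, by field_simp; linear_combination -h⟩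

lemma aux_cddt (h2 : (2:F) ≠ 0) (hm1 : ¬ IsSquare (-1:F)) (h5 : IsSquare (5:F))
    (h5ne : (5:F) ≠ 0)
    (f : F → F) (finv : ∀ x : F, f x = x⁻¹) (b : F) :
    cDDT f (-1) 1 b =
      if b = 0 then 1 else if b = 1 ∨ b = -1 then 3
      else if IsSquare (b^2 + 4) then 2 else 0 := by
  classical
  have hb4 := aux_b4 hm1 h2
  have h1 : (1:F) ≠ -1 := fun h => h2 (by linear_combination h)
  unfold cDDT
  simp only [finv, neg_one_mul, sub_neg_eq_add]
  by_cases hb0 : b = 0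
  · subst hb0
    rw [if_pos rfl]
    have : univ.filter (fun x : F => (x+1)⁻¹ + x⁻¹ = 0) = {-(2⁻¹ : F)} := by
      ext x
      simp only [mem_filter, mem_univ, true_and, mem_singleton, aux_sol_iff]
      constructor
      · rintro (⟨_, h⟩ | ⟨_, h⟩ | h)
        · exact absurd h.symm one_ne_zero
        · exact absurd h (fun hc => (one_ne_zero : (1:F) ≠ 0) (by linear_combination hc))
        · have h2x : 2 * x = 2 * (-(2⁻¹:F)) := by
            rw [mul_neg, mul_inv_cancel₀ h2]
            linear_combination -h
          exact mul_left_cancel₀ h2 h2x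
      · rintro rfl
        right; right
        field_simp
        ring
    rw [this, card_singleton]
  · rw [if_neg hb0]
    by_cases hb1 : b = 1
    · subst hb1
      rw [if_pos (Or.inl rfl)]
      have hD : discrim (1:F) (1-2) (-1) = 5 := by rw [discrim]; ring
      have hQ := aux_quad_card h2 (one_ne_zero (α := F)) (a := 1) (b := (1:F)-2) (c := -1)
        (by rw [hD]; exact h5ne)
      rw [hD, if_pos h5] at hQ
      have : univ.filter (fun x : F => (x+1)⁻¹ + x⁻¹ = 1)
          = insert 0 (univ.filter (fun x : F => 1*(x*x) + (1-2)*x + (-1) = 0)) := by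
        ext x
        simp only [mem_filter, mem_univ, true_and, mem_insert, aux_sol_iff]
        constructor
        · rintro (⟨h, _⟩ | ⟨_, h⟩ | h)
          · exact Or.inl h
          · exact absurd h h1
          · exact Or.inr h
        · rintro (rfl | h)
          · tauto
          · exact Or.inr (Or.inr h)
      rw [this, card_insert_of_notMem, hQ]
      simp only [mem_filter, mem_univ, true_and]
      intro h
      exact one_ne_zero (α := F) (by linear_combination -h)
    · by_cases hbm1 : b = -1
      · subst hbm1
        rw [if_pos (Or.inr rfl)]
        have hD : discrim (-1:F) (-1-2) (-1) = 5 := by rw [discrim]; ring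
        have hQ := aux_quad_card h2 (neg_ne_zero.mpr (one_ne_zero (α := F)))
          (a := -1) (b := (-1:F)-2) (c := -1) (by rw [hD]; exact h5ne)
        rw [hD, if_pos h5] at hQ
        have : univ.filter (fun x : F => (x+1)⁻¹ + x⁻¹ = -1)
            = insert (-1) (univ.filter (fun x : F => -1*(x*x) + (-1-2)*x + (-1) = 0)) := by
          ext x
          simp only [mem_filter, mem_univ, true_and, mem_insert, aux_sol_iff]
          constructor
          · rintro (⟨_, h⟩ | ⟨h, _⟩ | h)
            · exact absurd h (fun hh => h1 hh.symm)
            · exact Or.inl h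
            · exact Or.inr h
          · rintro (rfl | h)
            · tauto
            · exact Or.inr (Or.inr h)
        rw [this, card_insert_of_notMem, hQ]
        simp only [mem_filter, mem_univ, true_and]
        intro h
        exact one_ne_zero (α := F) (by linear_combination h)
      · rw [if_neg (by tauto)]
        have hD : discrim b (b-2) (-1) = b^2 + 4 := by rw [discrim]; ring
        have hQ := aux_quad_card h2 hb0 (a := b) (b := b-2) (c := -1)
          (by rw [hD]; exact hb4 b)
        rw [hD] at hQ
        rw [← hQ]
        congr 1
        ext x
        simp only [mem_filter, mem_univ, true_and, aux_sol_iff]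
        constructor
        · rintro (⟨_, h⟩ | ⟨_, h⟩ | h)
          · exact absurd h hb1
          · exact absurd h hbm1
          · exact h
        · exact fun h => Or.inr (Or.inr h)

lemma aux_sqcount (h2 : (2:F) ≠ 0) (hm1 : ¬IsSquare (-1:F))
    [DecidablePred (fun b : F => IsSquare (b^2+4))] :
    2 * (univ.filter (fun b : F => IsSquare (b^2+4))).card = Fintype.card F - 1 := by
  classical
  have hb4 := aux_b4 hm1 h2
  have h4 : (4:F) ≠ 0 := by
    intro h; exact h2 (by
      have : (2:F)*2 = 0 := by linear_combination h
      rcases mul_eq_zero.mp this with h' | h' <;> exact h')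
  set P : Finset (F×F) := univ.filter (fun q : F × F => q.2*q.2 = q.1^2+4) with hP
  have h1 : P.card = Fintype.card F - 1 := by
    rw [← card_univ (α := F), ← Finset.card_erase_of_mem (mem_univ (0:F))]
    apply Finset.card_bij (fun (q : F×F) _ => q.2 - q.1)
    · intro q hq
      rw [hP, mem_filter] at hq
      rw [mem_erase]
      refine ⟨?_, mem_univ _⟩
      intro h
      have hq2 : q.2 = q.1 := by linear_combination h
      apply h4
      have := hq.2
      rw [hq2] at this
      linear_combination -this
    · intro q hq q' hq' h
      rw [hP, mem_filter] at hq hq'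
      have hd : q.2 - q.1 ≠ 0 := by
        intro h0
        have hq2 : q.2 = q.1 := by linear_combination h0
        apply h4
        have := hq.2
        rw [hq2] at this
        linear_combination -this
      have hd' : q'.2 - q'.1 ≠ 0 := by
        intro h0
        have hq2 : q'.2 = q'.1 := by linear_combination h0
        apply h4
        have := hq'.2
        rw [hq2] at this
        linear_combination -this
      -- (q.2-q.1)(q.2+q.1) = 4 and same for q'
      have hs : (q.2 - q.1) * (q.2 + q.1) = 4 := by linear_combination hq.2
      have hs' : (q'.2 - q'.1) * (q'.2 + q'.1) = 4 := by linear_combination hq'.2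
      rw [h] at hs
      have hsum : q.2 + q.1 = q'.2 + q'.1 := by
        apply mul_left_cancel₀ hd'
        rw [hs, hs']
      have e1 : q.1 = q'.1 := by
        apply mul_left_cancel₀ h2
        linear_combination hsum - h
      have e2 : q.2 = q'.2 := by
        apply mul_left_cancel₀ h2
        linear_combination hsum + h
      exact Prod.ext e1 e2
    · intro t ht
      rw [mem_erase] at ht
      have ht0 : t ≠ 0 := ht.1
      refine ⟨((4*t⁻¹ - t)/2, (4*t⁻¹ + t)/2), ?_, ?_⟩
      · rw [hP, mem_filter]
        refine ⟨mem_univ _, ?_⟩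
        field_simp
        ring
      · field_simp
        ring
  have h2' : P.card = ∑ b : F, (univ.filter (fun y : F => y*y = b^2+4)).card := by
    rw [Finset.card_eq_sum_card_fiberwise (f := Prod.fst) (t := univ)
      (fun q _ => mem_univ _)]
    refine Finset.sum_congr rfl (fun b _ => ?_)
    apply Finset.card_bij (fun (q : F × F) _ => q.2)
    · intro q hq
      rw [mem_filter, hP, mem_filter] at hq
      simp only [mem_filter, mem_univ, true_and]
      rw [← hq.2]
      exact hq.1.2
    · intro q hq q' hq' h
      rw [mem_filter, hP, mem_filter] at hq hq'
      exact Prod.ext (hq.2.trans hq'.2.symm) h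
    · intro y hy
      simp only [mem_filter, mem_univ, true_and] at hy
      exact ⟨(b, y), by simp [hP, hy], rfl⟩
  have h3 : ∀ b : F, (univ.filter (fun y : F => y*y = b^2+4)).card
      = if IsSquare (b^2+4) then 2 else 0 := by
    intro b
    by_cases hs : IsSquare (b^2+4)
    · obtain ⟨r, hr⟩ := hs
      have hr0 : r ≠ 0 := fun h => hb4 b (by rw [hr, h, mul_zero])
      rw [if_pos ⟨r, hr⟩]
      have : univ.filter (fun y : F => y*y = b^2+4) = {r, -r} := by
        ext y
        simp only [mem_filter, mem_univ, true_and, mem_insert, mem_singleton, hr]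
        exact mul_self_eq_mul_self_iff
      rw [this, card_insert_of_notMem, card_singleton]
      simp only [mem_singleton]
      intro h
      apply hr0
      apply mul_left_cancel₀ h2
      linear_combination h
    · rw [if_neg hs, card_eq_zero, filter_eq_empty_iff]
      intro y _
      exact fun h => hs ⟨y, h.symm⟩
  have h5 : ∑ b : F, (if IsSquare (b^2+4) then 2 else 0)
      = 2 * (univ.filter (fun b : F => IsSquare (b^2+4))).card := by
    rw [← Finset.sum_filter, Finset.sum_const, smul_eq_mul, mul_comm]
  rw [← h1, h2']
  rw [Finset.sum_congr rfl (fun b _ => h3 b), h5]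

end AuxNeg

theorem neg_one_spectrum_inverse_three_mod_four_chi_five_one (p n : ℕ) (hp : p.Prime) (hpodd : Odd p) (hn : 1 ≤ n)
    {F : Type*} [Field F] [Fintype F] [DecidableEq F]
    (hF : Fintype.card F = p ^ n)
    (hmod : p ^ n % 4 = 3) (hchi : chi (5 : F) = 1)
    (f : F → F) (hf : ∀ x : F, f x = x ^ (p ^ n - 2)) :
    omegaSpec f (-1) 0 = (p ^ n + 1) / 2 ∧ omegaSpec f (-1) 1 = 1 ∧
    omegaSpec f (-1) 2 = (p ^ n - 7) / 2 ∧ omegaSpec f (-1) 3 = 2 ∧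
    ∀ i : ℕ, 4 ≤ i → omegaSpec f (-1) i = 0 := by
  classical
  have hq3 : Fintype.card F % 4 = 3 := by rw [hF]; exact hmod
  have hm1 : ¬ IsSquare (-1:F) :=
    fun h => (FiniteField.isSquare_neg_one_iff.mp h) hq3
  have h2 : (2:F) ≠ 0 := by
    apply Ring.two_ne_zero
    intro hc
    have := FiniteField.even_card_iff_char_two.mp hc
    omega
  have h5 : IsSquare (5:F) ∧ (5:F) ≠ 0 := by
    by_cases h0 : (5:F) = 0
    · exfalso; unfold chi at hchi; rw [if_pos h0] at hchi; norm_num at hchi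
    · refine ⟨?_, h0⟩
      by_cases hs : IsSquare (5:F)
      · exact hs
      · exfalso; unfold chi at hchi; rw [if_neg h0, if_neg hs] at hchi; norm_num at hchi
  have hqge : 3 ≤ Fintype.card F := by omega
  have finv : ∀ x : F, f x = x⁻¹ := by
    intro x
    rw [hf]
    by_cases hx : x = 0
    · subst hx
      rw [inv_zero]
      exact zero_pow (by omega)
    · have h1 : x ^ (p ^ n - 1) = 1 := by
        rw [← hF]; exact FiniteField.pow_card_sub_one_eq_one x hx
      have hmul : x ^ (p ^ n - 2) * x = 1 := by
        rw [← pow_succ]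
        have : p ^ n - 2 + 1 = p ^ n - 1 := by
          rw [← hF]; omega
        rw [this]; exact h1
      exact eq_inv_of_mul_eq_one_right (by rw [mul_comm]; exact hmul)
  have hb4 := aux_b4 hm1 h2
  have hC := aux_cddt h2 hm1 h5.1 h5.2 f finv
  have hS2 : 2 * (univ.filter (fun b : F => IsSquare (b^2+4))).card
      = Fintype.card F - 1 := aux_sqcount h2 hm1
  have hsq0 : IsSquare ((0:F)^2 + 4) := ⟨2, by norm_num⟩
  have hsq1 : IsSquare ((1:F)^2 + 4) := by
    have : ((1:F)^2 + 4) = 5 := by norm_num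
    rw [this]; exact h5.1
  have hsqm1 : IsSquare (((-1):F)^2 + 4) := by
    have : (((-1):F)^2 + 4) = 5 := by norm_num
    rw [this]; exact h5.1
  have h1ne : (1:F) ≠ -1 := fun h => h2 (by linear_combination h)
  have h0ne1 : (0:F) ≠ 1 := fun h => one_ne_zero h.symm
  have h0nem1 : (0:F) ≠ -1 := fun h => one_ne_zero (by linear_combination h)
  refine ⟨?_, ?_, ?_, ?_, ?_⟩
  · -- ω₀ = (q+1)/2
    unfold omegaSpec
    have hset : univ.filter (fun b : F => cDDT f (-1) 1 b = 0)
        = univ.filter (fun b : F => ¬ IsSquare (b^2+4)) := by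
      ext b
      simp only [mem_filter, mem_univ, true_and, hC b]
      split_ifs with hb0 hb1 hbs
      · subst hb0
        simp only [hsq0, not_true, iff_false]
      · rcases hb1 with rfl | rfl
        · simp only [hsq1, not_true, iff_false]
        · simp only [hsqm1, not_true, iff_false]
      · simp [hbs]
      · simp [hbs]
    rw [hset]
    have := Finset.card_filter_add_card_filter_not
      (s := (univ : Finset F)) (fun b : F => IsSquare (b^2+4))
    rw [card_univ, hF] at this
    rw [hF] at hS2
    omega
  · -- ω₁ = 1
    unfold omegaSpec
    have hset : univ.filter (fun b : F => cDDT f (-1) 1 b = 1) = {(0:F)} := by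
      ext b
      simp only [mem_filter, mem_univ, true_and, mem_singleton, hC b]
      split_ifs with hb0 hb1 hbs
      · simp [hb0]
      · rcases hb1 with rfl | rfl <;> simp [h0ne1.symm, h0nem1.symm]
      · simp [hb0]
      · simp [hb0]
    rw [hset, card_singleton]
  · -- ω₂ = (q-7)/2
    unfold omegaSpec
    have hset : univ.filter (fun b : F => cDDT f (-1) 1 b = 2)
        = (univ.filter (fun b : F => IsSquare (b^2+4))) \ {0, 1, -1} := by
      ext b
      simp only [mem_filter, mem_univ, true_and, mem_sdiff, mem_insert, mem_singleton, hC b]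
      split_ifs with hb0 hb1 hbs
      · simp [hb0]
      · rcases hb1 with rfl | rfl <;> simp
      · simp [hbs, hb0, not_or]
        push_neg at hb1
        exact hb1
      · simp [hbs, hb0]
    rw [hset]
    have hsub : ({0, 1, -1} : Finset F) ⊆ univ.filter (fun b : F => IsSquare (b^2+4)) := by
      intro b hb
      simp only [mem_insert, mem_singleton] at hb
      rcases hb with rfl | rfl | rfl <;>
        simp only [mem_filter, mem_univ, true_and] <;>
        [exact hsq0; exact hsq1; exact hsqm1]
    rw [card_sdiff_of_subset hsub]
    have hcard3 : ({0, 1, -1} : Finset F).card = 3 := by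
      rw [card_insert_of_notMem (by simp [h0ne1, h0nem1]),
        card_insert_of_notMem (by simp [h1ne]), card_singleton]
    rw [hcard3, hF] at *
    omega
  · -- ω₃ = 2
    unfold omegaSpec
    have hset : univ.filter (fun b : F => cDDT f (-1) 1 b = 3) = {(1:F), -1} := by
      ext b
      simp only [mem_filter, mem_univ, true_and, mem_insert, mem_singleton, hC b]
      split_ifs with hb0 hb1 hbs
      · subst hb0; simp [h0ne1.symm, (fun h => h0nem1 h : ¬ (0:F) = -1)]
      · simp [hb1]
      · push_neg at hb1
        simp [hb1.1, hb1.2]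
      · push_neg at hb1
        simp [hb1.1, hb1.2]
    rw [hset, card_insert_of_notMem (by simp [h1ne]), card_singleton]
  · -- ω_i = 0 for i ≥ 4
    intro i hi
    unfold omegaSpec
    rw [Finset.card_eq_zero, Finset.filter_eq_empty_iff]
    intro b _
    rw [hC b]
    split_ifs <;> omega
end

section
/- Let p be an odd prime and n ≥ 1 with p^n ≡ 3 (mod 4) and χ(5) = −1, and let f(X) = X^{p^n−2} be the inverse function on F_{p^n}. Then the (−1)-differential spectrum of f satisfies ₋₁ω_0 = (p^n−3)/2, ₋₁ω_1 = 3, ₋₁ω_2 = (p^n−3)/2, and ₋₁ω_i = 0 for all i ≥ 3. -/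
open Finset

section InvSpecAuxSec
set_option linter.unusedSectionVars false

variable {F : Type*} [Field F] [Fintype F] [DecidableEq F]

private lemma chiAux_two_ne_zero (hns : ¬ IsSquare (-1 : F)) : (2:F) ≠ 0 :=
  fun h => hns ⟨1, by linear_combination -h⟩

private lemma chiAux_S_card (hns : ¬ IsSquare (-1 : F)) (b : F) (hb : b ≠ 0) :
    (univ.filter (fun x : F => x ≠ 0 ∧ x ≠ -1 ∧ b*(x*(x+1)) = 2*x+1)).card = 0 ∨
    (univ.filter (fun x : F => x ≠ 0 ∧ x ≠ -1 ∧ b*(x*(x+1)) = 2*x+1)).card = 2 := by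
  set S := univ.filter (fun x : F => x ≠ 0 ∧ x ≠ -1 ∧ b*(x*(x+1)) = 2*x+1) with hS
  have h2 : (2:F) ≠ 0 := chiAux_two_ne_zero hns
  have hmem : ∀ x, x ∈ S ↔ x ≠ 0 ∧ x ≠ -1 ∧ b*(x*(x+1)) = 2*x+1 := by
    intro x; simp [hS]
  have hsum : ∀ x ∈ S, ∀ y ∈ S, x ≠ y → b*(x+y+1) = 2 := by
    intro x hx y hy hxy
    obtain ⟨-, -, hx3⟩ := (hmem x).1 hx
    obtain ⟨-, -, hy3⟩ := (hmem y).1 hy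
    have h0 : (x - y) * (b*(x+y+1) - 2) = 0 := by linear_combination hx3 - hy3
    rcases mul_eq_zero.1 h0 with h | h
    · exact absurd (sub_eq_zero.1 h) hxy
    · exact sub_eq_zero.1 h
  have hcard2 : S.card ≤ 2 := by
    rcases S.eq_empty_or_nonempty with h | ⟨x0, hx0⟩
    · simp [h]
    · refine le_trans (card_le_card (fun y hy => ?_))
        (le_trans (card_insert_le x0 {2/b - 1 - x0}) (by simp))
      rcases eq_or_ne y x0 with h | h
      · simp [h]
      · have hsxy := hsum y hy x0 hx0 h
        have hyv : y = 2/b - 1 - x0 := by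
          field_simp
          linear_combination hsxy
        simp [hyv]
  have hcard1 : S.card ≠ 1 := by
    intro h1
    obtain ⟨x, hx⟩ := card_eq_one.mp h1
    have hxS : x ∈ S := hx ▸ mem_singleton_self x
    obtain ⟨hx0, hx1, hxe⟩ := (hmem x).1 hxS
    have hbx : b * x ≠ 0 := mul_ne_zero hb hx0
    have hxb : x ≠ b⁻¹ := by
      intro h
      rw [h] at hxe
      field_simp at hxe
      apply hb
      have hbb : b^2 = 0 := by linear_combination (-b^2) * hxe
      exact pow_eq_zero_iff (two_ne_zero).elim |>.1 hbb
    set y := -(b*x)⁻¹ with hy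
    have hyv : y * (b*x) = -1 := by rw [hy, neg_mul, inv_mul_cancel₀ hbx]
    have hy0 : y ≠ 0 := by
      intro h; rw [h, zero_mul] at hyv; exact (by norm_num : (0:F) ≠ -1) hyv
    have hy1 : y ≠ -1 := by
      intro h
      apply hxb
      rw [h] at hyv
      field_simp
      linear_combination -hyv
    have key : (b*(y*(y+1)) - (2*y+1)) * (b*x^2) = 0 := by
      linear_combination (y*b*x - 1 + b*x - 2*x) * hyv - hxe
    have hye : b*(y*(y+1)) = 2*y+1 := by
      rcases mul_eq_zero.1 key with h | h
      · exact sub_eq_zero.1 h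
      · exact absurd h (mul_ne_zero hb (pow_ne_zero 2 hx0))
    have hyS : y ∈ S := (hmem y).2 ⟨hy0, hy1, hye⟩
    have hyx : y = x := by rw [hx] at hyS; exact mem_singleton.1 hyS
    rw [hyx] at hyv
    have hfix : x * (b*x) = -1 := hyv
    by_cases hb2 : b = 2
    · subst hb2
      exact h2 (by linear_combination hfix - hxe)
    · have hlin : x*(b-2) = 2 := by linear_combination hxe - hfix
      have hb4 : b^2 + 4 = 0 := by
        linear_combination (b-2)^2 * hfix - (b*(x*(b-2)+2)) * hlin
      exact hns ⟨b/2, by field_simp; linear_combination -hb4⟩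
  omega

end InvSpecAuxSec

theorem neg_one_spectrum_inverse_three_mod_four_chi_five_neg_one (p n : ℕ) (hp : p.Prime) (hpodd : Odd p) (hn : 1 ≤ n)
    {F : Type*} [Field F] [Fintype F] [DecidableEq F]
    (hF : Fintype.card F = p ^ n)
    (hmod : p ^ n % 4 = 3) (hchi : chi (5 : F) = -1)
    (f : F → F) (hf : ∀ x : F, f x = x ^ (p ^ n - 2)) :
    omegaSpec f (-1) 0 = (p ^ n - 3) / 2 ∧ omegaSpec f (-1) 1 = 3 ∧
    omegaSpec f (-1) 2 = (p ^ n - 3) / 2 ∧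
    ∀ i : ℕ, 3 ≤ i → omegaSpec f (-1) i = 0 := by
  have hq3 : 3 ≤ p ^ n := by omega
  have hns : ¬ IsSquare (-1 : F) := fun h =>
    (FiniteField.isSquare_neg_one_iff.1 h) (by rw [hF]; exact hmod)
  have h2 : (2:F) ≠ 0 := chiAux_two_ne_zero hns
  have h5 : ¬ IsSquare (5 : F) := by
    intro hsq
    simp only [chi, hsq, if_true] at hchi
    split_ifs at hchi <;> norm_num at hchi
  have hone : (1:F) ≠ -1 := by
    intro h
    exact h2 (by linear_combination h)
  have hzo : (0:F) ≠ 1 := zero_ne_one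
  have hzm : (0:F) ≠ -1 := by
    intro h
    exact (one_ne_zero : (1:F) ≠ 0) (by linear_combination h)
  -- f is the inverse map
  have hinv : ∀ x : F, f x = x⁻¹ := by
    intro x
    rw [hf]
    rcases eq_or_ne x 0 with h | h
    · subst h; rw [inv_zero]; exact zero_pow (by omega)
    · have h1 : x ^ (p^n - 1) = 1 := by
        rw [← hF]; exact FiniteField.pow_card_sub_one_eq_one x h
      have hm : x * x ^ (p^n - 2) = 1 := by
        rw [← pow_succ']
        rw [show p^n - 2 + 1 = p^n - 1 by omega]
        exact h1
      exact eq_inv_of_mul_eq_one_left (by rw [mul_comm] at hm; exact hm)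
  have hΔ : ∀ b : F, cDDT f (-1) 1 b
      = (univ.filter (fun x : F => (x+1)⁻¹ + x⁻¹ = b)).card := by
    intro b
    unfold cDDT
    congr 1
    apply filter_congr
    intro x _
    rw [hinv, hinv, neg_one_mul, sub_neg_eq_add]
  -- fiber characterizations
  have hfib : ∀ b : F, b ≠ 1 → b ≠ -1 →
      univ.filter (fun x : F => (x+1)⁻¹ + x⁻¹ = b)
        = univ.filter (fun x : F => x ≠ 0 ∧ x ≠ -1 ∧ b*(x*(x+1)) = 2*x+1) := by
    intro b hb1 hbm1
    ext x
    simp only [mem_filter, mem_univ, true_and]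
    constructor
    · intro h
      have hx0 : x ≠ 0 := by
        rintro rfl; norm_num at h; exact hb1 h.symm
      have hx1 : x ≠ -1 := by
        rintro rfl; norm_num at h; exact hbm1 h.symm
      have hx1' : x + 1 ≠ 0 := fun hh => hx1 (eq_neg_of_add_eq_zero_left hh)
      refine ⟨hx0, hx1, ?_⟩
      field_simp at h
      linear_combination -h
    · rintro ⟨hx0, hx1, h⟩
      have hx1' : x + 1 ≠ 0 := fun hh => hx1 (eq_neg_of_add_eq_zero_left hh)
      field_simp
      linear_combination -h
  -- the three special values
  have hΔ0 : cDDT f (-1) 1 0 = 1 := by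
    rw [hΔ, hfib 0 hzo hzm]
    rw [show (univ.filter (fun x : F => x ≠ 0 ∧ x ≠ -1 ∧ 0*(x*(x+1)) = 2*x+1))
        = {-(2⁻¹ : F)} from ?_]
    · exact card_singleton _
    ext x
    simp only [mem_filter, mem_univ, true_and, mem_singleton]
    constructor
    · rintro ⟨hx0, hx1, h⟩
      have : (2:F) * x = -1 := by linear_combination -h
      field_simp
      linear_combination this
    · rintro rfl
      refine ⟨?_, ?_, ?_⟩
      · simp [h2]
      · intro h
        rw [neg_inj, inv_eq_one] at h
        exact (one_ne_zero : (1:F) ≠ 0) (by linear_combination h)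
      · rw [zero_mul, mul_neg, mul_inv_cancel₀ h2]; ring
  have hΔ1 : cDDT f (-1) 1 1 = 1 := by
    rw [hΔ]
    rw [show (univ.filter (fun x : F => (x+1)⁻¹ + x⁻¹ = 1)) = {(0:F)} from ?_]
    · exact card_singleton _
    ext x
    simp only [mem_filter, mem_univ, true_and, mem_singleton]
    constructor
    · intro h
      by_contra hx0
      have hx1 : x ≠ -1 := by
        rintro rfl; norm_num at h; exact hone h.symm
      have hx1' : x + 1 ≠ 0 := fun hh => hx1 (eq_neg_of_add_eq_zero_left hh)
      field_simp at h
      exact h5 ⟨2*x - 1, by linear_combination 4*h⟩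
    · rintro rfl; norm_num
  have hΔm1 : cDDT f (-1) 1 (-1) = 1 := by
    rw [hΔ]
    rw [show (univ.filter (fun x : F => (x+1)⁻¹ + x⁻¹ = -1)) = {(-1:F)} from ?_]
    · exact card_singleton _
    ext x
    simp only [mem_filter, mem_univ, true_and, mem_singleton]
    constructor
    · intro h
      by_contra hx1
      have hx0 : x ≠ 0 := by
        rintro rfl; norm_num at h; exact hone h
      have hx1' : x + 1 ≠ 0 := fun hh => hx1 (eq_neg_of_add_eq_zero_left hh)
      field_simp at h
      exact h5 ⟨2*x + 3, by linear_combination -4*h⟩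
    · rintro rfl; norm_num
  have hΔother : ∀ b : F, b ≠ 0 → b ≠ 1 → b ≠ -1 →
      cDDT f (-1) 1 b = 0 ∨ cDDT f (-1) 1 b = 2 := by
    intro b hb0 hb1 hbm1
    rw [hΔ, hfib b hb1 hbm1]
    exact chiAux_S_card hns b hb0
  have hΔle : ∀ b : F, cDDT f (-1) 1 b ≤ 2 := by
    intro b
    rcases eq_or_ne b 0 with rfl | hb0
    · omega
    rcases eq_or_ne b 1 with rfl | hb1
    · omega
    rcases eq_or_ne b (-1) with rfl | hbm1
    · omega
    rcases hΔother b hb0 hb1 hbm1 with h | h <;> omega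
  -- total count
  have hsum : ∑ b : F, cDDT f (-1) 1 b = p ^ n := by
    have h := Finset.card_eq_sum_card_fiberwise
      (f := fun x : F => (x+1)⁻¹ + x⁻¹) (s := univ) (t := univ)
      (fun x _ => mem_univ _)
    rw [card_univ, hF] at h
    rw [h]
    apply Finset.sum_congr rfl
    intro b _
    rw [hΔ b]
  -- the sets
  set T : Finset F := {0, 1, -1} with hTdef
  have hT : T.card = 3 := by
    rw [hTdef, card_insert_of_notMem (by simp [hzo, hzm]),
      card_insert_of_notMem (by simp [hone]), card_singleton]
  have hTmem : ∀ b : F, b ∈ T ↔ b = 0 ∨ b = 1 ∨ b = -1 := by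
    intro b; simp [hTdef]
  have hΔT : ∀ b ∈ T, cDDT f (-1) 1 b = 1 := by
    intro b hb
    rcases (hTmem b).1 hb with rfl | rfl | rfl
    exacts [hΔ0, hΔ1, hΔm1]
  set U : Finset F := univ \ T with hUdef
  have hUcard : U.card = p ^ n - 3 := by
    rw [hUdef, card_sdiff_of_subset (subset_univ T), hT, card_univ, hF]
  have hΔU : ∀ b ∈ U, cDDT f (-1) 1 b = 0 ∨ cDDT f (-1) 1 b = 2 := by
    intro b hb
    rw [hUdef, mem_sdiff] at hb
    have := hb.2
    rw [hTmem] at this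
    push_neg at this
    exact hΔother b this.1 this.2.1 this.2.2
  -- ω₁ = 3
  have hω1 : omegaSpec f (-1) 1 = 3 := by
    unfold omegaSpec
    rw [show (univ.filter (fun b : F => cDDT f (-1) 1 b = 1)) = T from ?_, hT]
    ext b
    simp only [mem_filter, mem_univ, true_and]
    constructor
    · intro h
      by_contra hb
      have hbU : b ∈ U := by rw [hUdef, mem_sdiff]; exact ⟨mem_univ _, hb⟩
      rcases hΔU b hbU with h' | h' <;> omega
    · intro hb; exact hΔT b hb
  -- ω_i = 0 for i ≥ 3
  have hωge : ∀ i : ℕ, 3 ≤ i → omegaSpec f (-1) i = 0 := by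
    intro i hi
    unfold omegaSpec
    rw [card_eq_zero, filter_eq_empty_iff]
    intro b _
    have := hΔle b
    omega
  -- ω₀ and ω₂
  have hsplit := Finset.sum_filter_add_sum_filter_not U
    (fun b => cDDT f (-1) 1 b = 2) (fun b => cDDT f (-1) 1 b)
  have hsumT : ∑ b ∈ T, cDDT f (-1) 1 b = 3 := by
    rw [hTdef]
    rw [Finset.sum_insert (by simp [hzo, hzm]),
      Finset.sum_insert (by simp [hone]), Finset.sum_singleton]
    rw [hΔ0, hΔ1, hΔm1]
    norm_num
  have hsumU : ∑ b ∈ U, cDDT f (-1) 1 b = p ^ n - 3 := by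
    have h := Finset.sum_sdiff (f := fun b => cDDT f (-1) 1 b) (subset_univ T)
    rw [← hUdef, hsumT, hsum] at h
    beta_reduce at h
    omega
  have hA2sum : ∑ b ∈ U.filter (fun b => cDDT f (-1) 1 b = 2), cDDT f (-1) 1 b
      = 2 * (U.filter (fun b => cDDT f (-1) 1 b = 2)).card := by
    rw [Finset.sum_congr rfl (fun b hb => (mem_filter.1 hb).2), Finset.sum_const]
    rw [smul_eq_mul, mul_comm]
  have hA0sum : ∑ b ∈ U.filter (fun b => ¬ cDDT f (-1) 1 b = 2), cDDT f (-1) 1 b = 0 := by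
    apply Finset.sum_eq_zero
    intro b hb
    obtain ⟨hbU, hb2⟩ := mem_filter.1 hb
    rcases hΔU b hbU with h | h
    · exact h
    · exact absurd h hb2
  have hfiltercard := Finset.card_filter_add_card_filter_not
    (s := U) (p := fun b => cDDT f (-1) 1 b = 2)
  have hω2eq : omegaSpec f (-1) 2 = (U.filter (fun b => cDDT f (-1) 1 b = 2)).card := by
    unfold omegaSpec
    congr 1
    apply Finset.ext
    intro b
    rw [mem_filter, mem_filter]
    constructor
    · intro h
      have hbU : b ∈ U := by
        rw [hUdef, mem_sdiff]
        refine ⟨mem_univ _, fun hbT => ?_⟩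
        rw [hΔT b hbT] at h
        omega
      exact ⟨hbU, h.2⟩
    · exact fun h => ⟨mem_univ _, h.2⟩
  have hω0eq : omegaSpec f (-1) 0 = (U.filter (fun b => ¬ cDDT f (-1) 1 b = 2)).card := by
    unfold omegaSpec
    congr 1
    apply Finset.ext
    intro b
    rw [mem_filter, mem_filter]
    constructor
    · intro h
      have hbU : b ∈ U := by
        rw [hUdef, mem_sdiff]
        refine ⟨mem_univ _, fun hbT => ?_⟩
        rw [hΔT b hbT] at h
        omega
      refine ⟨hbU, by omega⟩
    · rintro ⟨hbU, hb2⟩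
      rcases hΔU b hbU with h | h
      · exact ⟨mem_univ _, h⟩
      · exact absurd h hb2
  have h2ω2 : 2 * omegaSpec f (-1) 2 = p ^ n - 3 := by
    rw [hA2sum, hA0sum, hsumU] at hsplit
    rw [hω2eq]
    omega
  have hω02 : omegaSpec f (-1) 2 + omegaSpec f (-1) 0 = p ^ n - 3 := by
    rw [hω2eq, hω0eq, ← hUcard]
    exact hfiltercard
  refine ⟨by omega, hω1, by omega, hωge⟩
end

section
/- Let p be an odd prime and n ≥ 1 with p^n ≡ 1 (mod 4) and χ(5) = −1, and let f(X) = X^{p^n−2} be the inverse function on F_{p^n}. Then the (−1)-differential spectrum of f satisfies ₋₁ω_0 = (p^n−5)/2, ₋₁ω_1 = 5, ₋₁ω_2 = (p^n−5)/2, and ₋₁ω_i = 0 for all i ≥ 3. -/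
open Finset

def Nb {F : Type*} [Field F] [Fintype F] [DecidableEq F] (b : F) : ℕ :=
  (Finset.univ.filter (fun x : F => (x + 1)⁻¹ + x⁻¹ = b)).card

lemma sol_iff {F : Type*} [Field F] (b x : F) :
    (x + 1)⁻¹ + x⁻¹ = b ↔
      (x = 0 ∧ b = 1) ∨ (x = -1 ∧ b = -1) ∨
      (x ≠ 0 ∧ x + 1 ≠ 0 ∧ b * x ^ 2 + (b - 2) * x - 1 = 0) := by
  by_cases hx : x = 0
  · subst hx; simp [eq_comm, inv_neg]
  by_cases hx1 : x + 1 = 0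
  · have hxe : x = -1 := by linear_combination hx1
    subst hxe
    simp [eq_comm, inv_neg]
  · constructor
    · intro h
      right; right
      refine ⟨hx, hx1, ?_⟩
      field_simp at h
      linear_combination -h
    · rintro (⟨h0, _⟩ | ⟨h1, _⟩ | ⟨_, _, h⟩)
      · exact absurd h0 hx
      · exact absurd (by rw [h1]; ring) hx1
      · field_simp
        linear_combination -h

lemma key {F : Type*} [Field F] [Fintype F] [DecidableEq F]
    (h2 : (2 : F) ≠ 0) (h5 : ¬ IsSquare (5 : F)) (b : F) :
    Nb b ≤ 2 ∧ (Nb b = 1 ↔ b = 0 ∨ b = 1 ∨ b = -1 ∨ b ^ 2 + 4 = 0) := by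
  have h50 : (5 : F) ≠ 0 := fun h => h5 (h ▸ ⟨0, by ring⟩)
  have h1m : (1 : F) ≠ -1 := fun h => h2 (by linear_combination h)
  have hm1 : (-1 : F) ≠ 1 := fun h => h1m h.symm
  have h8 : (8 : F) ≠ 0 := by
    intro h; apply h2
    have h4 : (2:F) * 4 = 0 := by linear_combination h
    rcases mul_eq_zero.mp h4 with h' | h'
    · exact h'
    · exact absurd (by linear_combination h') (mul_ne_zero h2 h2)
  have h4 : (4 : F) ≠ 0 := fun h => (mul_ne_zero h2 h2) (by linear_combination h)
  by_cases hb1 : b = 1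
  · subst hb1
    have hset : (univ.filter fun x : F => (x + 1)⁻¹ + x⁻¹ = (1:F)) = {0} := by
      ext x
      simp only [mem_filter, mem_univ, true_and, mem_singleton, sol_iff]
      constructor
      · rintro (⟨h0, _⟩ | ⟨_, h⟩ | ⟨hx0, hx1, h⟩)
        · exact h0
        · exact absurd h h1m
        · exact absurd ⟨2 * x - 1, by linear_combination -4 * h⟩ h5
      · rintro rfl; simp
    rw [Nb, hset]
    simp
  by_cases hbm1 : b = -1
  · subst hbm1
    have hset : (univ.filter fun x : F => (x + 1)⁻¹ + x⁻¹ = (-1:F)) = {-1} := by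
      ext x
      simp only [mem_filter, mem_univ, true_and, mem_singleton, sol_iff]
      constructor
      · rintro (⟨_, h⟩ | ⟨h0, _⟩ | ⟨hx0, hx1, h⟩)
        · exact absurd h hm1
        · exact h0
        · exact absurd ⟨2 * x + 3, by linear_combination 4 * h⟩ h5
      · rintro rfl; simp
    rw [Nb, hset]
    simp
  by_cases hb0 : b = 0
  · subst hb0
    have hset : (univ.filter fun x : F => (x + 1)⁻¹ + x⁻¹ = (0:F)) = {-(2⁻¹)} := by
      ext x
      simp only [mem_filter, mem_univ, true_and, mem_singleton, sol_iff]
      constructor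
      · rintro (⟨_, h⟩ | ⟨_, h⟩ | ⟨hx0, hx1, h⟩)
        · exact absurd h.symm one_ne_zero
        · exact absurd h.symm (neg_ne_zero.mpr one_ne_zero)
        · have h2x : 2 * x = 2 * (-(2⁻¹)) := by
            rw [mul_neg, mul_inv_cancel₀ h2]
            linear_combination -h
          exact mul_left_cancel₀ h2 h2x
      · rintro rfl
        have h21 : (2:F) * 2⁻¹ = 1 := mul_inv_cancel₀ h2
        have hhalf : (-(2⁻¹:F) + 1) = 2⁻¹ := by linear_combination -h21
        refine Or.inr (Or.inr ⟨neg_ne_zero.mpr (inv_ne_zero h2), ?_, ?_⟩)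
        · rw [hhalf]; exact inv_ne_zero h2
        · linear_combination h21
    rw [Nb, hset]
    simp
  -- now b ∉ {0, 1, -1}
  have hmem : ∀ x : F, ((x + 1)⁻¹ + x⁻¹ = b) ↔
      (x ≠ 0 ∧ x + 1 ≠ 0 ∧ b * x ^ 2 + (b - 2) * x - 1 = 0) := by
    intro x
    rw [sol_iff]
    constructor
    · rintro (⟨_, h⟩ | ⟨_, h⟩ | h)
      · exact absurd h hb1
      · exact absurd h hbm1
      · exact h
    · exact fun h => Or.inr (Or.inr h)
  by_cases hdisc : b ^ 2 + 4 = 0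
  · -- one double root
    have hb2 : b ≠ 2 := by
      intro h; exact h8 (by rw [h] at hdisc; linear_combination hdisc)
    have hbm2 : b ≠ -2 := by
      intro h; exact h8 (by rw [h] at hdisc; linear_combination hdisc)
    have h2b : 2 * b ≠ 0 := mul_ne_zero h2 hb0
    have hset : (univ.filter fun x : F => (x + 1)⁻¹ + x⁻¹ = b) = {(2 - b) / (2 * b)} := by
      ext x
      simp only [mem_filter, mem_univ, true_and, mem_singleton, hmem]
      constructor
      · rintro ⟨hx0, hx1, h⟩
        have hsq : (2 * b * x - (2 - b)) ^ 2 = 0 := by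
          linear_combination 4 * b * h + hdisc
        have hlin : 2 * b * x - (2 - b) = 0 := by
          exact pow_eq_zero_iff (n := 2) (by norm_num) |>.mp hsq
        field_simp
        linear_combination hlin
      · rintro rfl
        refine ⟨?_, ?_, ?_⟩
        · rw [div_ne_zero_iff]
          exact ⟨by intro h; exact hb2 (by linear_combination -h), h2b⟩
        · intro h
          rw [div_add' _ _ _ h2b] at h
          rcases div_eq_zero_iff.mp h with h' | h'
          · exact hbm2 (by linear_combination h')
          · exact h2b h'
        · field_simp
          linear_combination -hdisc
    rw [Nb, hset]
    exact ⟨by simp, by simp [hdisc]⟩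
  · -- either 0 or 2 roots
    have hcard2 : Nb b ≤ 2 := by
      by_contra hgt
      push_neg at hgt
      rw [Nb] at hgt
      obtain ⟨x, y, z, hx, hy, hz, hxy, hxz, hyz⟩ := Finset.two_lt_card_iff.mp hgt
      rw [mem_filter] at hx hy hz
      obtain ⟨_, _, _, hqx⟩ := And.intro hx.1 ((hmem x).mp hx.2)
      obtain ⟨_, _, hqy⟩ := (hmem y).mp hy.2
      obtain ⟨_, _, hqz⟩ := (hmem z).mp hz.2
      have e1 : (x - y) * (b * (x + y) + (b - 2)) = 0 := by
        linear_combination hqx - hqy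
      have e2 : (x - z) * (b * (x + z) + (b - 2)) = 0 := by
        linear_combination hqx - hqz
      have f1 : b * (x + y) + (b - 2) = 0 :=
        (mul_eq_zero.mp e1).resolve_left (sub_ne_zero.mpr hxy)
      have f2 : b * (x + z) + (b - 2) = 0 :=
        (mul_eq_zero.mp e2).resolve_left (sub_ne_zero.mpr hxz)
      have : b * (y - z) = 0 := by linear_combination f1 - f2
      rcases mul_eq_zero.mp this with h' | h'
      · exact hb0 h'
      · exact hyz (by linear_combination h')
    refine ⟨hcard2, ?_⟩
    constructor
    · intro h1
      exfalso
      obtain ⟨x, hxs⟩ := Finset.card_eq_one.mp h1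
      have hx : x ∈ univ.filter fun x : F => (x + 1)⁻¹ + x⁻¹ = b := by
        rw [hxs]; exact mem_singleton_self x
      rw [mem_filter] at hx
      obtain ⟨hx0, hx1, hq⟩ := (hmem x).mp hx.2
      have hbx : b * x ≠ 0 := mul_ne_zero hb0 hx0
      set x' : F := -(b * x)⁻¹ with hx'def
      have ht : (b * x) * (b * x)⁻¹ = 1 := mul_inv_cancel₀ hbx
      have hq'' : (b * x) ^ 2 * (b * x' ^ 2 + (b - 2) * x' - 1) = 0 := by
        rw [hx'def]
        linear_combination (-b) * hq +
          (b * (b * x) * (b * x)⁻¹ + b - (b - 2) * (b * x)) * ht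
      have hq' : b * x' ^ 2 + (b - 2) * x' - 1 = 0 :=
        (mul_eq_zero.mp hq'').resolve_left (pow_ne_zero 2 hbx)
      have hx'0 : x' ≠ 0 := neg_ne_zero.mpr (inv_ne_zero hbx)
      have hx'1 : x' + 1 ≠ 0 := by
        intro h
        have h1 : (1 : F) = 0 := by linear_combination hq' - (b * x' - 2) * h
        exact one_ne_zero h1
      have hx'mem : x' ∈ univ.filter fun x : F => (x + 1)⁻¹ + x⁻¹ = b := by
        rw [mem_filter]
        exact ⟨mem_univ _, (hmem x').mpr ⟨hx'0, hx'1, hq'⟩⟩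
      rw [hxs, mem_singleton] at hx'mem
      -- x' = x
      have e1 : b * x ^ 2 = -1 := by
        have : (b * x) * x' = -1 := by
          rw [hx'def, mul_neg, mul_inv_cancel₀ hbx]
        rw [hx'mem] at this
        linear_combination this
      have e2 : (b - 2) * x = 2 := by linear_combination hq - e1
      exact hdisc (by linear_combination (b - 2) ^ 2 * e1 - b * ((b - 2) * x + 2) * e2)
    · rintro (h | h | h | h)
      · exact absurd h hb0
      · exact absurd h hb1
      · exact absurd h hbm1
      · exact absurd h hdisc

theorem neg_one_spectrum_inverse_one_mod_four_chi_five_neg_one (p n : ℕ) (hp : p.Prime) (hpodd : Odd p) (hn : 1 ≤ n)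
    {F : Type*} [Field F] [Fintype F] [DecidableEq F]
    (hF : Fintype.card F = p ^ n)
    (hmod : p ^ n % 4 = 1) (hchi : chi (5 : F) = -1)
    (f : F → F) (hf : ∀ x : F, f x = x ^ (p ^ n - 2)) :
    omegaSpec f (-1) 0 = (p ^ n - 5) / 2 ∧ omegaSpec f (-1) 1 = 5 ∧
    omegaSpec f (-1) 2 = (p ^ n - 5) / 2 ∧
    ∀ i : ℕ, 3 ≤ i → omegaSpec f (-1) i = 0 := by
  -- basic facts
  have hp3 : 3 ≤ p := by
    have := hp.two_le
    have := Nat.odd_iff.mp hpodd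
    omega
  have hq3 : 3 ≤ Fintype.card F := by
    rw [hF]
    calc 3 ≤ p := hp3
    _ ≤ p ^ n := Nat.le_self_pow (by omega) p
  have hchar2 : ringChar F ≠ 2 := by
    intro h
    have := (FiniteField.even_card_iff_char_two (F := F)).mp h
    rw [hF] at this
    omega
  have h2 : (2 : F) ≠ 0 := Ring.two_ne_zero hchar2
  have h4 : (4 : F) ≠ 0 := fun h => (mul_ne_zero h2 h2) (by linear_combination h)
  have h5 : ¬ IsSquare (5 : F) := by
    simp only [chi] at hchi
    split_ifs at hchi with h h'
    all_goals first
      | exact h'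
      | exact absurd hchi (by decide)
  have h50 : (5 : F) ≠ 0 := fun h => h5 (h ▸ ⟨0, by ring⟩)
  have hneg1 : IsSquare (-1 : F) := by
    rw [FiniteField.isSquare_neg_one_iff, hF]
    omega
  obtain ⟨i, hi⟩ := hneg1
  set r : F := 2 * i with hrdef
  have hr : r ^ 2 + 4 = 0 := by rw [hrdef]; linear_combination -4 * hi
  have hr0 : r ≠ 0 := fun h => h4 (by linear_combination hr - (r + 0) * h)
  have hr1 : r ≠ 1 := fun h => h50 (by linear_combination hr - (r + 1) * h)
  have hrm1 : r ≠ -1 := fun h => h50 (by linear_combination hr - (r - 1) * h)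
  have hrr : r ≠ -r := fun h => hr0 (by
    rcases mul_eq_zero.mp (show (2 : F) * r = 0 by linear_combination h) with h' | h'
    · exact absurd h' h2
    · exact h')
  -- the inverse function
  have hinv : ∀ x : F, f x = x⁻¹ := by
    intro x
    rw [hf, ← hF]
    by_cases hx : x = 0
    · rw [hx, inv_zero, zero_pow (by omega : Fintype.card F - 2 ≠ 0)]
    · refine eq_inv_of_mul_eq_one_left ?_
      rw [← pow_succ, show Fintype.card F - 2 + 1 = Fintype.card F - 1 by omega]
      exact FiniteField.pow_card_sub_one_eq_one x hx
  have hc : ∀ b : F, cDDT f (-1) 1 b = Nb b := by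
    intro b
    unfold cDDT Nb
    congr 1
    ext x
    simp only [mem_filter, mem_univ, true_and, hinv]
    constructor <;> intro h <;> linear_combination h
  have homega : ∀ i : ℕ, omegaSpec f (-1) i
      = (univ.filter fun b : F => Nb b = i).card := by
    intro i
    unfold omegaSpec
    simp only [hc]
  have hle : ∀ b : F, Nb b ≤ 2 := fun b => (key h2 h5 b).1
  have h1iff : ∀ b : F, Nb b = 1 ↔ (b = 0 ∨ b = 1 ∨ b = -1 ∨ b ^ 2 + 4 = 0) :=
    fun b => (key h2 h5 b).2
  -- omega_1 = 5
  have hw1 : (univ.filter fun b : F => Nb b = 1).card = 5 := by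
    have hset : (univ.filter fun b : F => Nb b = 1) = {0, 1, -1, r, -r} := by
      ext b
      simp only [mem_filter, mem_univ, true_and, h1iff, mem_insert, mem_singleton]
      constructor
      · rintro (h | h | h | h)
        · exact Or.inl h
        · exact Or.inr (Or.inl h)
        · exact Or.inr (Or.inr (Or.inl h))
        · have hsplit : (b - r) * (b + r) = 0 := by linear_combination h - hr
          rcases mul_eq_zero.mp hsplit with h' | h'
          · exact Or.inr (Or.inr (Or.inr (Or.inl (by linear_combination h'))))
          · exact Or.inr (Or.inr (Or.inr (Or.inr (by linear_combination h'))))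
      · rintro (rfl | rfl | rfl | rfl | rfl)
        · exact Or.inl rfl
        · exact Or.inr (Or.inl rfl)
        · exact Or.inr (Or.inr (Or.inl rfl))
        · exact Or.inr (Or.inr (Or.inr hr))
        · exact Or.inr (Or.inr (Or.inr (by linear_combination hr)))
    rw [hset]
    rw [card_insert_of_notMem (by
      simp only [mem_insert, mem_singleton]
      push_neg
      exact ⟨fun h => one_ne_zero h.symm, fun h => one_ne_zero (by linear_combination h),
        fun h => hr0 h.symm, fun h => hr0 (by linear_combination h)⟩)]
    rw [card_insert_of_notMem (by
      simp only [mem_insert, mem_singleton]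
      push_neg
      exact ⟨fun h => h2 (by linear_combination h), fun h => hr1 h.symm,
        fun h => hrm1 (by linear_combination h)⟩)]
    rw [card_insert_of_notMem (by
      simp only [mem_insert, mem_singleton]
      push_neg
      exact ⟨fun h => hrm1 h.symm, fun h => hr1 (by linear_combination h)⟩)]
    rw [card_insert_of_notMem (by simp only [mem_singleton]; exact hrr)]
    rw [card_singleton]
  -- total counts
  have hsum : ∑ b : F, Nb b = Fintype.card F := by
    simp only [Nb]
    rw [← Finset.card_univ]
    exact (Finset.card_eq_sum_card_fiberwise
      (f := fun x : F => (x + 1)⁻¹ + x⁻¹) (fun x _ => mem_univ _)).symm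
  have hsum2 : ∑ b : F, Nb b
      = (univ.filter fun b : F => Nb b = 1).card
        + 2 * (univ.filter fun b : F => Nb b = 2).card := by
    rw [Finset.card_filter, Finset.card_filter, Finset.mul_sum, ← Finset.sum_add_distrib]
    refine Finset.sum_congr rfl fun b _ => ?_
    have := hle b
    split_ifs <;> omega
  have htot : Fintype.card F
      = (univ.filter fun b : F => Nb b = 0).card
        + ((univ.filter fun b : F => Nb b = 1).card
          + (univ.filter fun b : F => Nb b = 2).card) := by
    rw [← Finset.card_univ, Finset.card_filter, Finset.card_filter, Finset.card_filter,
      ← Finset.sum_add_distrib, ← Finset.sum_add_distrib]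
    rw [Finset.card_eq_sum_ones]
    refine Finset.sum_congr rfl fun b _ => ?_
    have := hle b
    split_ifs <;> omega
  rw [hF] at hsum htot
  refine ⟨?_, ?_, ?_, ?_⟩
  · rw [homega]; omega
  · rw [homega]; omega
  · rw [homega]; omega
  · intro j hj
    rw [homega j, Finset.card_eq_zero, Finset.filter_eq_empty_iff]
    intro b _
    have := hle b
    omega
end

section
/- Let n ≥ 1 and let f(X) = X^{5^n−2} be the inverse function on F_{5^n}. Then the (−1)-differential spectrum of f satisfies ₋₁ω_0 = (5^n−1)/2, ₋₁ω_1 = 1, ₋₁ω_2 = (5^n−1)/2, and ₋₁ω_i = 0 for all i ≥ 3. -/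
open Finset

section NegOneSpecAux
open Finset
variable {F : Type*} [Field F] [Fintype F] [DecidableEq F]

private lemma negOneSpec_two_ne (h5 : (5:F) = 0) : (2:F) ≠ 0 := by
  intro h; exact one_ne_zero (α := F) (by linear_combination h5 - 2*h)

private lemma negOneSpec_three_ne (h5 : (5:F) = 0) : (3:F) ≠ 0 := by
  intro h; exact one_ne_zero (α := F) (by linear_combination 2*h - h5)

private lemma negOneSpec_fiber_zero (h5 : (5:F) = 0) :
    univ.filter (fun x : F => (x+1)⁻¹ + x⁻¹ = 0) = {2} := by
  ext x
  simp only [mem_filter, mem_univ, true_and, mem_singleton]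
  constructor
  · intro h
    have hx0 : x ≠ 0 := by
      rintro rfl; simp at h
    have hx1 : x + 1 ≠ 0 := by
      intro hx1
      rw [hx1] at h
      simp [inv_eq_zero] at h
      exact hx0 h
    field_simp at h
    linear_combination 3*h - (x+1)*h5
  · rintro rfl
    have h2 := negOneSpec_two_ne h5
    have h3 : (2:F) + 1 ≠ 0 := by
      intro h; exact negOneSpec_three_ne h5 (by linear_combination h)
    field_simp
    linear_combination h5

private lemma negOneSpec_fiber_one (h5 : (5:F) = 0) :
    univ.filter (fun x : F => (x+1)⁻¹ + x⁻¹ = 1) = {0, 3} := by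
  have h2 := negOneSpec_two_ne h5
  ext x
  simp only [mem_filter, mem_univ, true_and, mem_insert, mem_singleton]
  constructor
  · intro h
    by_cases hx0 : x = 0
    · exact Or.inl hx0
    right
    have hx1 : x + 1 ≠ 0 := by
      intro hx1
      rw [hx1] at h
      simp [inv_eq_zero] at h
      rw [h] at hx1
      exact h2 (by linear_combination hx1)
    field_simp at h
    have hsq : (x - 3)^2 = 0 := by linear_combination -h + (2-x)*h5
    exact sub_eq_zero.mp (pow_eq_zero_iff (n := 2) (by norm_num) |>.mp hsq)
  · rintro (rfl | rfl)
    · simp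
    · have h3 := negOneSpec_three_ne h5
      have h4 : (3:F) + 1 ≠ 0 := by
        intro h; exact one_ne_zero (α := F) (by linear_combination 4*h - 3*h5)
      field_simp
      linear_combination -h5

private lemma negOneSpec_fiber_negone (h5 : (5:F) = 0) :
    univ.filter (fun x : F => (x+1)⁻¹ + x⁻¹ = -1) = {-1, 1} := by
  have h2 := negOneSpec_two_ne h5
  ext x
  simp only [mem_filter, mem_univ, true_and, mem_insert, mem_singleton]
  constructor
  · intro h
    by_cases hx1 : x + 1 = 0
    · exact Or.inl (by linear_combination hx1)
    right
    have hx0 : x ≠ 0 := by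
      rintro rfl
      simp at h
      exact h2 (by linear_combination h)
    field_simp at h
    have hsq : (x - 1)^2 = 0 := by linear_combination h - x*h5
    exact sub_eq_zero.mp (pow_eq_zero_iff (n := 2) (by norm_num) |>.mp hsq)
  · rintro (rfl | rfl)
    · simp [inv_neg]
    · have h4 : (1:F) + 1 ≠ 0 := by intro h; exact h2 (by linear_combination h)
      field_simp
      linear_combination h5

private lemma negOneSpec_fiber_gen (h5 : (5:F) = 0) (b : F)
    (hb0 : b ≠ 0) (hb1 : b ≠ 1) (hbm1 : b ≠ -1) :
    (univ.filter (fun x : F => (x+1)⁻¹ + x⁻¹ = b)).card = 0 ∨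
    (univ.filter (fun x : F => (x+1)⁻¹ + x⁻¹ = b)).card = 2 := by
  have hquad : ∀ x : F, ((x+1)⁻¹ + x⁻¹ = b) ↔ (b*x^2 + (b-2)*x - 1 = 0) := by
    intro x
    by_cases hx0 : x = 0
    · subst hx0
      simp only [zero_add, inv_one, inv_zero, add_zero, mul_zero, zero_pow, mul_zero]
      constructor
      · intro h; exact absurd h.symm hb1
      · intro h; exact absurd (by linear_combination -h) (one_ne_zero (α := F))
    by_cases hx1 : x + 1 = 0
    · have hx : x = -1 := by linear_combination hx1
      subst hx
      simp only [inv_neg, inv_one]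
      rw [show (-1 : F) + 1 = 0 by ring]
      simp only [inv_zero, zero_add]
      constructor
      · intro h; exact absurd h.symm hbm1
      · intro h; exact absurd (by linear_combination h) (one_ne_zero (α := F))
    constructor
    · intro h
      field_simp at h
      linear_combination -h
    · intro h
      field_simp
      linear_combination -h
  rw [filter_congr (fun x _ => by exact_mod_cast (hquad x))]
  set S := univ.filter (fun x : F => b*x^2 + (b-2)*x - 1 = 0) with hS
  rcases S.eq_empty_or_nonempty with he | ⟨r, hr⟩
  · left; rw [he]; rfl
  · right
    have hrQ : b*r^2 + (b-2)*r - 1 = 0 := by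
      have := mem_filter.mp hr; exact this.2
    set r' : F := (2-b)/b - r with hr'def
    have hr'Q : b*r'^2 + (b-2)*r' - 1 = 0 := by
      rw [hr'def]; field_simp; linear_combination b*hrQ
    have hne : r ≠ r' := by
      intro heq
      have he2 : b*r + b*r = 2 - b := by
        rw [hr'def] at heq
        field_simp at heq
        linear_combination heq
      have : (b-1)*(b+1) = 0 := by
        linear_combination (-4*b)*hrQ + (2*b*r + b - 2)*he2 - h5
      rcases mul_eq_zero.mp this with h | h
      · exact hb1 (by linear_combination h)
      · exact hbm1 (by linear_combination h)
    have hSeq : S = {r, r'} := by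
      ext x
      simp only [hS, mem_filter, mem_univ, true_and, mem_insert, mem_singleton]
      constructor
      · intro hx
        have key : (x - r) * (b*x + b*r + b - 2) = 0 := by
          linear_combination hx - hrQ
        rcases mul_eq_zero.mp key with h | h
        · exact Or.inl (sub_eq_zero.mp h)
        · right
          rw [hr'def]
          field_simp
          linear_combination h
      · rintro (rfl | rfl)
        · exact hrQ
        · exact hr'Q
    rw [hSeq, card_insert_of_notMem (by simpa using hne), card_singleton]

private lemma negOneSpec_count (n : ℕ) (hF : Fintype.card F = 5 ^ n)
    (Δ : F → ℕ)
    (hΔsum : ∀ b : F, Δ b = (univ.filter (fun x : F => (x+1)⁻¹ + x⁻¹ = b)).card)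
    (hΔ0 : Δ 0 = 1)
    (hΔcases : ∀ b : F, b ≠ 0 → Δ b = 0 ∨ Δ b = 2) :
    (univ.filter (fun b : F => Δ b = 0)).card = (5^n - 1)/2 ∧
    (univ.filter (fun b : F => Δ b = 1)).card = 1 ∧
    (univ.filter (fun b : F => Δ b = 2)).card = (5^n - 1)/2 ∧
    ∀ i : ℕ, 3 ≤ i → (univ.filter (fun b : F => Δ b = i)).card = 0 := by
  have hsum : ∑ b : F, Δ b = 5^n := by
    have h := Finset.card_eq_sum_card_fiberwise
      (s := (univ : Finset F)) (t := univ)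
      (f := fun x : F => (x+1)⁻¹ + x⁻¹) (fun x _ => mem_univ _)
    rw [card_univ, hF] at h
    rw [Finset.sum_congr rfl (fun b _ => hΔsum b)]
    exact h.symm
  have hlt : ∀ b : F, Δ b < 3 := by
    intro b
    rcases eq_or_ne b 0 with rfl | hb
    · omega
    · rcases hΔcases b hb with h | h <;> omega
  have hω1 : (univ.filter (fun b : F => Δ b = 1)) = {0} := by
    ext b
    simp only [mem_filter, mem_univ, true_and, mem_singleton]
    constructor
    · intro h
      by_contra hb
      rcases hΔcases b hb with h0 | h2 <;> omega
    · rintro rfl; exact hΔ0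
  have hfe : (univ.erase (0:F)).filter (fun b => Δ b = 2)
      = univ.filter (fun b : F => Δ b = 2) := by
    ext b
    simp only [mem_filter, mem_erase, mem_univ, true_and, and_true, and_iff_right_iff_imp]
    intro h
    rintro rfl
    omega
  have hzero : ∑ b ∈ (univ.erase (0:F)).filter (fun b => ¬ Δ b = 2), Δ b = 0 := by
    apply Finset.sum_eq_zero
    intro b hb
    simp only [mem_filter, mem_erase, mem_univ, true_and, and_true] at hb
    rcases hΔcases b hb.1 with h | h
    · exact h
    · exact absurd h hb.2
  have htwo : ∑ b ∈ (univ.erase (0:F)).filter (fun b => Δ b = 2), Δ b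
      = 2 * (univ.filter (fun b : F => Δ b = 2)).card := by
    rw [Finset.sum_congr rfl (fun b hb => (mem_filter.mp hb).2), sum_const, smul_eq_mul,
      hfe, mul_comm]
  have hsum0 : Δ 0 + ∑ b ∈ univ.erase 0, Δ b = ∑ b : F, Δ b :=
    Finset.add_sum_erase _ _ (mem_univ 0)
  have hsplit := Finset.sum_filter_add_sum_filter_not (univ.erase (0:F))
    (fun b => Δ b = 2) Δ
  have key2 : 1 + 2 * (univ.filter (fun b : F => Δ b = 2)).card = 5^n := by
    rw [← hsum, ← hsum0, hΔ0, ← hsplit, htwo, hzero]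
    omega
  have hpart := Finset.card_eq_sum_card_fiberwise
    (s := (univ : Finset F)) (t := range 3) (f := Δ)
    (fun b _ => mem_range.mpr (hlt b))
  rw [card_univ, hF, Finset.sum_range_succ, Finset.sum_range_succ,
    Finset.sum_range_one] at hpart
  rw [hω1, card_singleton] at hpart ⊢
  refine ⟨by omega, rfl, by omega, ?_⟩
  intro i hi
  rw [Finset.card_eq_zero, Finset.filter_eq_empty_iff]
  intro b _
  have := hlt b
  omega

end NegOneSpecAux

theorem neg_one_spectrum_inverse_char_five (n : ℕ) (hn : 1 ≤ n)
    {F : Type*} [Field F] [Fintype F] [DecidableEq F]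
    (hF : Fintype.card F = 5 ^ n)
    (f : F → F) (hf : ∀ x : F, f x = x ^ (5 ^ n - 2)) :
    omegaSpec f (-1) 0 = (5 ^ n - 1) / 2 ∧ omegaSpec f (-1) 1 = 1 ∧
    omegaSpec f (-1) 2 = (5 ^ n - 1) / 2 ∧
    ∀ i : ℕ, 3 ≤ i → omegaSpec f (-1) i = 0 := by
  have h55 : 5 ≤ 5^n := by
    calc 5 = 5^1 := rfl
    _ ≤ 5^n := Nat.pow_le_pow_right (by norm_num) hn
  have h5 : (5:F) = 0 := by
    have hc : ((Fintype.card F : ℕ) : F) = 0 := FiniteField.cast_card_eq_zero F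
    rw [hF] at hc
    push_cast at hc
    exact pow_eq_zero_iff (by omega) |>.mp hc
  have hfi : ∀ x : F, f x = x⁻¹ := by
    intro x
    rcases eq_or_ne x 0 with rfl | hx
    · rw [hf, inv_zero]
      exact zero_pow (by omega)
    · have hx1 : x ^ (Fintype.card F - 1) = 1 := FiniteField.pow_card_sub_one_eq_one x hx
      rw [hF] at hx1
      rw [hf]
      have hm : x ^ (5^n - 2) * x = 1 := by
        rw [← pow_succ, show 5^n - 2 + 1 = 5^n - 1 by omega, hx1]
      field_simp
      linear_combination hm
  have hDDT : ∀ b : F, cDDT f (-1) 1 b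
      = (univ.filter (fun x : F => (x+1)⁻¹ + x⁻¹ = b)).card := by
    intro b
    unfold cDDT
    congr 1
    apply filter_congr
    intro x _
    rw [hfi, hfi]
    constructor <;> intro h <;> linear_combination h
  have hΔ0 : cDDT f (-1) 1 0 = 1 := by
    rw [hDDT, negOneSpec_fiber_zero h5, card_singleton]
  have hΔ1 : cDDT f (-1) 1 1 = 2 := by
    rw [hDDT, negOneSpec_fiber_one h5]
    have h03 : (0:F) ≠ 3 := fun h => negOneSpec_three_ne h5 h.symm
    rw [card_insert_of_notMem (by simpa using h03), card_singleton]
  have hΔm1 : cDDT f (-1) 1 (-1) = 2 := by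
    rw [hDDT, negOneSpec_fiber_negone h5]
    have hm11 : (-1:F) ≠ 1 := fun h => negOneSpec_two_ne h5 (by linear_combination -h)
    rw [card_insert_of_notMem (by simpa using hm11), card_singleton]
  have hΔcases : ∀ b : F, b ≠ 0 → cDDT f (-1) 1 b = 0 ∨ cDDT f (-1) 1 b = 2 := by
    intro b hb
    rcases eq_or_ne b 1 with rfl | hb1
    · exact Or.inr hΔ1
    rcases eq_or_ne b (-1) with rfl | hbm1
    · exact Or.inr hΔm1
    rw [hDDT]
    exact negOneSpec_fiber_gen h5 b hb hb1 hbm1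
  obtain ⟨c0, c1, c2, c3⟩ := negOneSpec_count n hF (fun b => cDDT f (-1) 1 b)
    hDDT hΔ0 hΔcases
  exact ⟨c0, c1, c2, c3⟩
end

section
/- Let n ≥ 1 and let f(X) = X^{3^n−2} be the inverse function on F_{3^n}. If n is odd, the boomerang spectrum of f satisfies v_0 = (3^n−3)/2, v_1 = 0, v_2 = (3^n−3)/2, v_3 = 2, and v_i = 0 for all i ≥ 4. If n is even, the boomerang spectrum of f satisfies v_0 = (3^n−1)/2, v_1 = 2, v_2 = (3^n−9)/2, v_3 = 0, v_4 = 0, v_5 = 2, and v_i = 0 for all i ≥ 6. -/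
open Finset

section BoomerangAux
variable {F : Type*} [Field F] [Fintype F] [DecidableEq F]


lemma sq_fiber_subset {c t0 : F} (ht0 : t0 ^ 2 = c) :
    (univ.filter fun t : F => t ^ 2 = c) ⊆ {t0, -t0} := by
  intro t ht
  simp only [mem_filter, mem_univ, true_and] at ht
  have h : (t - t0) * (t + t0) = 0 := by linear_combination ht - ht0
  rcases mul_eq_zero.mp h with h | h
  · simp [mem_insert, sub_eq_zero.mp h]
  · simp [mem_insert, eq_neg_of_add_eq_zero_left h]

lemma sq_fiber_card_le_two (c : F) :
    (univ.filter fun t : F => t ^ 2 = c).card ≤ 2 := by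
  rcases (univ.filter fun t : F => t ^ 2 = c).eq_empty_or_nonempty with h | ⟨t0, ht0⟩
  · simp [h]
  · simp only [mem_filter, mem_univ, true_and] at ht0
    refine le_trans (card_le_card (sq_fiber_subset ht0)) ?_
    exact (card_insert_le _ _).trans (by simp)

lemma sq_fiber_card_of_ne (h3 : (3:F) = 0) {c t0 : F} (ht0 : t0 ^ 2 = c) (hc : c ≠ 0) :
    (univ.filter fun t : F => t ^ 2 = c).card = 2 := by
  have ht0' : t0 ≠ 0 := by rintro rfl; exact hc (by simpa using ht0.symm)
  have hne : t0 ≠ -t0 := by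
    intro h
    apply ht0'
    have h2 : (2:F) ≠ 0 := by
      intro h2
      have : (1:F) = 0 := by linear_combination h3 - h2
      exact one_ne_zero this
    have : (2:F) * t0 = 0 := by linear_combination h
    rcases mul_eq_zero.mp this with h' | h'
    · exact absurd h' h2
    · exact h'
  have hset : (univ.filter fun t : F => t ^ 2 = c) = {t0, -t0} := by
    apply Finset.Subset.antisymm (sq_fiber_subset ht0)
    intro t ht
    simp only [mem_insert, mem_singleton] at ht
    rcases ht with rfl | rfl
    · simp [ht0]
    · simp only [mem_filter, mem_univ, true_and]
      linear_combination ht0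
  rw [hset, card_insert_of_notMem (by simpa using hne), card_singleton]

lemma sq_fiber_card_one_iff (h3 : (3:F) = 0) (c : F) :
    (univ.filter fun t : F => t ^ 2 = c).card = 1 ↔ c = 0 := by
  constructor
  · intro h
    obtain ⟨t0, ht0⟩ := Finset.card_eq_one.mp h
    have hmem : t0 ∈ (univ.filter fun t : F => t ^ 2 = c) := by rw [ht0]; simp
    simp only [mem_filter, mem_univ, true_and] at hmem
    by_contra hc
    rw [sq_fiber_card_of_ne h3 hmem hc] at h
    omega
  · rintro rfl
    have : (univ.filter fun t : F => t ^ 2 = 0) = {0} := by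
      ext t; simp [pow_eq_zero_iff]
    rw [this, card_singleton]

lemma sq_fiber_card_of_nonsquare {c : F} (hc : ¬ IsSquare c) :
    (univ.filter fun t : F => t ^ 2 = c).card = 0 := by
  rw [Finset.card_eq_zero]
  ext t
  simp only [mem_filter, mem_univ, true_and, notMem_empty, iff_false]
  intro h
  exact hc ⟨t, by rw [← h]; ring⟩

lemma sum_sq_fiber (h3 : (3:F) = 0) :
    ∑ b : F, (univ.filter fun t : F => t ^ 2 = b ^ 2 + 1).card = Fintype.card F - 1 := by
  have h2 : (2:F) = -1 := by linear_combination h3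
  classical
  have hstep : (univ.filter fun p : F × F => p.2 ^ 2 = p.1 ^ 2 + 1).card
      = ∑ b : F, (univ.filter fun t : F => t ^ 2 = b ^ 2 + 1).card := by
    rw [Finset.card_eq_sum_card_fiberwise (f := Prod.fst) (t := univ) (fun x _ => mem_univ _)]
    refine Finset.sum_congr rfl fun b _ => ?_
    refine Finset.card_nbij' (i := Prod.snd) (j := fun t => (b, t)) ?_ ?_ ?_ ?_
    · rintro ⟨b', t⟩ hp
      simp only [mem_coe, mem_filter, mem_univ, true_and] at hp ⊢
      obtain ⟨h1, h2⟩ := hp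
      subst h2; exact h1
    · intro t ht
      simp only [mem_coe, mem_filter, mem_univ, true_and] at ht ⊢
      exact ⟨ht, trivial⟩
    · rintro ⟨b', t⟩ hp
      simp only [mem_coe, mem_filter, mem_univ, true_and] at hp
      simp [hp.2]
    · intro t ht; rfl
  rw [← hstep]
  have hcard : (univ.filter fun u : F => u ≠ 0).card = Fintype.card F - 1 := by
    rw [filter_ne' univ (0:F), card_erase_of_mem (mem_univ _), card_univ]
  rw [← hcard]
  refine Finset.card_nbij' (i := fun p => p.2 + p.1)
    (j := fun u => (u⁻¹ - u, -(u + u⁻¹))) ?_ ?_ ?_ ?_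
  · rintro ⟨b, t⟩ hp
    simp only [mem_coe, mem_filter, mem_univ, true_and] at hp ⊢
    intro hs
    have : (1:F) = 0 := by linear_combination (t - b) * hs - hp
    exact one_ne_zero this
  · intro u hu
    simp only [mem_coe, mem_filter, mem_univ, true_and] at hu ⊢
    have huu : u * u⁻¹ = 1 := mul_inv_cancel₀ hu
    linear_combination 4 * huu + h3 - 4 * huu * 0
  · rintro ⟨b, t⟩ hp
    simp only [mem_coe, mem_filter, mem_univ, true_and] at hp
    have hmul : (t + b) * (t - b) = 1 := by linear_combination hp
    have hinv : (t + b)⁻¹ = t - b := inv_eq_of_mul_eq_one_right hmul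
    have : (t + b) ≠ 0 := by
      intro hs
      have : (1:F) = 0 := by linear_combination (t - b) * hs - hp
      exact one_ne_zero this
    simp only [Prod.mk.injEq]
    constructor
    · rw [hinv]; linear_combination -b * h3
    · rw [hinv]; linear_combination -t * h3
  · intro u hu
    simp only [mem_coe, mem_filter, mem_univ, true_and] at hu
    linear_combination -u * h3



lemma BCT_inverse (h3 : (3:F) = 0) (f : F → F) (hf0 : f 0 = 0)
    (hfi : ∀ x : F, x ≠ 0 → f x = x⁻¹) {b : F} (hb : b ≠ 0) :
    BCT f 1 b = (univ.filter fun t : F => t ^ 2 = b ^ 2 + 1).card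
      + (if b = 1 ∨ b = -1 then 3 else 0) := by
  have h1n : (1:F) ≠ -1 := by
    intro h
    exact one_ne_zero (show (1:F) = 0 by linear_combination h3 - h)
  have hm1 : (-1:F) ≠ 0 := by
    intro h
    exact one_ne_zero (show (1:F) = 0 by linear_combination -h)
  have him : ((-1:F))⁻¹ = -1 := by rw [inv_neg, inv_one]
  set P : Finset (F × F) :=
    if b = 1 then {((0:F),(-1:F)),(1,0),(-1,1)}
    else if b = -1 then {((0:F),(1:F)),(-1,0),(1,-1)} else ∅ with hP
  set R : Finset F := univ.filter (fun x : F => b*x^2 + (b+1)*x - 1 = 0) with hR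
  have hRx0 : ∀ x ∈ R, x ≠ 0 := by
    intro x hx h
    rw [hR, mem_filter] at hx
    rw [h] at hx
    exact one_ne_zero (show (1:F) = 0 by linear_combination -hx.2)
  have hRxm : ∀ x ∈ R, x ≠ -1 := by
    intro x hx h
    rw [hR, mem_filter] at hx
    rw [h] at hx
    exact one_ne_zero (show (1:F) = 0 by linear_combination hx.2 + h3)
  have key : (univ.filter (fun xy : F × F =>
      f xy.1 - f xy.2 = b ∧ f (xy.1 + 1) - f (xy.2 + 1) = b))
      = (R.image fun x => (x, -1 - x)) ∪ P := by
    ext ⟨x, y⟩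
    simp only [mem_filter, mem_univ, true_and, mem_union, mem_image]
    constructor
    · rintro ⟨e1, e2⟩
      by_cases hx0 : x = 0
      · subst hx0
        rw [hf0] at e1
        have hy0 : y ≠ 0 := by
          intro h; rw [h, hf0] at e1; exact hb (by linear_combination -e1)
        rw [hfi y hy0] at e1
        have hyy := mul_inv_cancel₀ hy0
        have hyv : y * b = -1 := by linear_combination -y * e1 - hyy
        rw [zero_add, hfi 1 one_ne_zero, inv_one] at e2
        by_cases hy1 : y + 1 = 0
        · have hy : y = -1 := by linear_combination hy1
          have hb1 : b = 1 := by rw [hy] at hyv; linear_combination -hyv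
          right; rw [hP, if_pos hb1, hy]; simp
        · rw [hfi _ hy1] at e2
          have hy1' := mul_inv_cancel₀ hy1
          have e3 : (1 - b) * (y + 1) = 1 := by linear_combination (y+1) * e2 + hy1'
          have hy' : y = b - 1 := by linear_combination e3 + hyv
          have hbq : (b+1)^2 = 0 := by
            rw [hy'] at hyv; linear_combination hyv + b * h3
          have hbm : b = -1 := by
            have := pow_eq_zero_iff (n := 2) (by norm_num) |>.mp hbq
            linear_combination this
          have hbne : ¬ b = 1 := by rw [hbm]; exact fun h => h1n h.symm
          have hy2 : y = 1 := by rw [hbm] at hy'; linear_combination hy' - h3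
          right; rw [hP, if_neg hbne, if_pos hbm, hy2]; simp
      · by_cases hy0 : y = 0
        · subst hy0
          rw [hf0, sub_zero, hfi x hx0] at e1
          have hxx := mul_inv_cancel₀ hx0
          have hxv : x * b = 1 := by linear_combination -x * e1 + hxx
          rw [zero_add, hfi 1 one_ne_zero, inv_one] at e2
          by_cases hx1 : x + 1 = 0
          · have hx : x = -1 := by linear_combination hx1
            have hbm : b = -1 := by rw [hx] at hxv; linear_combination -hxv
            have hbne : ¬ b = 1 := by rw [hbm]; exact fun h => h1n h.symm
            right; rw [hP, if_neg hbne, if_pos hbm, hx]; simp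
          · rw [hfi _ hx1] at e2
            have hx1' := mul_inv_cancel₀ hx1
            have e3 : (b + 1) * (x + 1) = 1 := by linear_combination -(x+1) * e2 + hx1'
            have hx' : x = -b - 1 := by linear_combination e3 - hxv
            have hbq : (b-1)^2 = 0 := by
              rw [hx'] at hxv; linear_combination -hxv - b * h3
            have hb1 : b = 1 := by
              have := pow_eq_zero_iff (n := 2) (by norm_num) |>.mp hbq
              linear_combination this
            have hx2 : x = 1 := by rw [hb1] at hx'; linear_combination hx' - h3
            right; rw [hP, if_pos hb1, hx2]; simp
        · by_cases hxm : x = -1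
          · subst hxm
            rw [hfi (-1) hm1, hfi y hy0, him] at e1
            have hyy := mul_inv_cancel₀ hy0
            have e1' : y * (1 + b) = -1 := by linear_combination -y * e1 - hyy
            rw [neg_add_cancel, hf0, zero_sub] at e2
            have hy1 : y + 1 ≠ 0 := by
              intro h
              rw [h, hf0] at e2
              exact hb (by linear_combination -e2)
            rw [hfi _ hy1] at e2
            have hy1' := mul_inv_cancel₀ hy1
            have e2' : (y + 1) * b = -1 := by linear_combination -(y+1) * e2 - hy1'
            have hyb : y = b := by linear_combination e1' - e2'
            have hbq : (b-1)^2 = 0 := by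
              rw [hyb] at e1'; linear_combination e1' - b * h3
            have hb1 : b = 1 := by
              have := pow_eq_zero_iff (n := 2) (by norm_num) |>.mp hbq
              linear_combination this
            have hy2 : y = 1 := by rw [hb1] at hyb; exact hyb
            right; rw [hP, if_pos hb1, hy2]; simp
          · by_cases hym : y = -1
            · subst hym
              rw [hfi x hx0, hfi (-1) hm1, him] at e1
              have hxx := mul_inv_cancel₀ hx0
              have e1' : x * (b - 1) = 1 := by linear_combination -x * e1 + hxx
              rw [neg_add_cancel, hf0, sub_zero] at e2
              have hx1 : x + 1 ≠ 0 := by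
                intro h
                rw [h, hf0] at e2
                exact hb e2.symm
              rw [hfi _ hx1] at e2
              have hx1' := mul_inv_cancel₀ hx1
              have e2' : (x + 1) * b = 1 := by linear_combination -(x+1) * e2 + hx1'
              have hxb : x = -b := by linear_combination e2' - e1'
              have hbq : (b+1)^2 = 0 := by
                rw [hxb] at e1'; linear_combination -e1' + b * h3
              have hbm : b = -1 := by
                have := pow_eq_zero_iff (n := 2) (by norm_num) |>.mp hbq
                linear_combination this
              have hbne : ¬ b = 1 := by rw [hbm]; exact fun h => h1n h.symm
              have hx2 : x = 1 := by rw [hbm] at hxb; linear_combination hxb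
              right; rw [hP, if_neg hbne, if_pos hbm, hx2]; simp
            · have hx1 : x + 1 ≠ 0 := fun h => hxm (by linear_combination h)
              have hy1 : y + 1 ≠ 0 := fun h => hym (by linear_combination h)
              rw [hfi x hx0, hfi y hy0] at e1
              rw [hfi _ hx1, hfi _ hy1] at e2
              have hxx := mul_inv_cancel₀ hx0
              have hyy := mul_inv_cancel₀ hy0
              have hxx1 := mul_inv_cancel₀ hx1
              have hyy1 := mul_inv_cancel₀ hy1
              have p1 : y - x = b * (x * y) := by
                linear_combination x*y*e1 - y*hxx + x*hyy
              have p2 : y - x = b * ((x+1)*(y+1)) := by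
                linear_combination (x+1)*(y+1)*e2 - (y+1)*hxx1 + (x+1)*hyy1
              have p3 : b * (x + y + 1) = 0 := by linear_combination p1 - p2
              have hxy : x + y + 1 = 0 := (mul_eq_zero.mp p3).resolve_left hb
              have hy' : y = -1 - x := by linear_combination hxy
              have root : b*x^2 + (b+1)*x - 1 = 0 := by
                rw [hy'] at p1; linear_combination p1 + x * h3
              left
              refine ⟨x, ?_, by rw [hy']⟩
              rw [hR, mem_filter]; exact ⟨mem_univ x, root⟩
    · rintro (⟨x', hx', heq⟩ | hPm)
      · obtain ⟨rfl, rfl⟩ := Prod.mk.injEq _ _ _ _ |>.mp heq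
        have hroot : b*x'^2 + (b+1)*x' - 1 = 0 := by
          have := hx'; rw [hR, mem_filter] at this; exact this.2
        have hx0 : x' ≠ 0 := hRx0 x' hx'
        have hxm : x' ≠ -1 := hRxm x' hx'
        have hyne : -1 - x' ≠ 0 := fun h => hxm (by linear_combination -h)
        have hx1 : x' + 1 ≠ 0 := fun h => hxm (by linear_combination h)
        have hy1 : -1 - x' + 1 ≠ 0 := fun h => hx0 (by linear_combination -h)
        have hxx := mul_inv_cancel₀ hx0
        have hww := mul_inv_cancel₀ hyne
        have hxx1 := mul_inv_cancel₀ hx1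
        have hyy1 := mul_inv_cancel₀ hy1
        constructor
        · rw [hfi x' hx0, hfi _ hyne]
          have G : (x' * (-1 - x')) * (x'⁻¹ - (-1 - x')⁻¹ - b) = 0 := by
            linear_combination (-1-x')*hxx - x'*hww + hroot - x'*h3
          have := (mul_eq_zero.mp G).resolve_left (mul_ne_zero hx0 hyne)
          linear_combination this
        · rw [hfi _ hx1, hfi _ hy1]
          have G : ((x' + 1) * (-1 - x' + 1)) * ((x' + 1)⁻¹ - (-1 - x' + 1)⁻¹ - b) = 0 := by
            linear_combination (-1-x'+1)*hxx1 - (x'+1)*hyy1 + hroot - x'*h3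
          have := (mul_eq_zero.mp G).resolve_left (mul_ne_zero hx1 hy1)
          linear_combination this
      · by_cases hb1 : b = 1
        · rw [hP, if_pos hb1] at hPm
          subst hb1
          have hfone : f 1 = 1 := by rw [hfi 1 one_ne_zero, inv_one]
          have hfmone : f (-1) = -1 := by rw [hfi (-1) hm1, him]
          have hftwo : f (1 + 1) = -1 := by
            rw [show (1:F) + 1 = -1 by linear_combination h3, hfmone]
          simp only [mem_insert, mem_singleton, Prod.mk.injEq] at hPm
          rcases hPm with ⟨rfl, rfl⟩ | ⟨rfl, rfl⟩ | ⟨rfl, rfl⟩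
          · constructor
            · rw [hf0, hfmone]; ring
            · rw [zero_add, neg_add_cancel, hfone, hf0]; ring
          · constructor
            · rw [hfone, hf0]; ring
            · rw [zero_add, hftwo, hfone]; linear_combination -h3
          · constructor
            · rw [hfmone, hfone]; linear_combination -h3
            · rw [neg_add_cancel, hf0, hftwo]; ring
        · by_cases hbm : b = -1
          · rw [hP, if_neg hb1, if_pos hbm] at hPm
            subst hbm
            have hfone : f 1 = 1 := by rw [hfi 1 one_ne_zero, inv_one]
            have hfmone : f (-1) = -1 := by rw [hfi (-1) hm1, him]
            have hftwo : f (1 + 1) = -1 := by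
              rw [show (1:F) + 1 = -1 by linear_combination h3, hfmone]
            simp only [mem_insert, mem_singleton, Prod.mk.injEq] at hPm
            rcases hPm with ⟨rfl, rfl⟩ | ⟨rfl, rfl⟩ | ⟨rfl, rfl⟩
            · constructor
              · rw [hf0, hfone]; ring
              · rw [zero_add, hfone, hftwo]; linear_combination h3
            · constructor
              · rw [hfmone, hf0]; ring
              · rw [neg_add_cancel, zero_add, hf0, hfone]; ring
            · constructor
              · rw [hfone, hfmone]; linear_combination h3
              · rw [neg_add_cancel, hf0, hftwo]; ring
          · rw [hP, if_neg hb1, if_neg hbm] at hPm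
            exact absurd hPm (notMem_empty _)
  have hdisj : Disjoint (R.image fun x => (x, -1 - x)) P := by
    rw [Finset.disjoint_left]
    rintro ⟨u, v⟩ hG hPm
    simp only [mem_image] at hG
    obtain ⟨x', hx', heq⟩ := hG
    obtain ⟨rfl, rfl⟩ := Prod.mk.injEq _ _ _ _ |>.mp heq
    have hx0 : x' ≠ 0 := hRx0 x' hx'
    have hxm : x' ≠ -1 := hRxm x' hx'
    by_cases hb1 : b = 1
    · rw [hP, if_pos hb1] at hPm
      simp only [mem_insert, mem_singleton, Prod.mk.injEq] at hPm
      rcases hPm with ⟨h1, h2⟩ | ⟨h1, h2⟩ | ⟨h1, h2⟩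
      · exact hx0 h1
      · rw [h1] at h2
        exact one_ne_zero (show (1:F) = 0 by linear_combination h2 + h3)
      · exact hxm h1
    · by_cases hbm : b = -1
      · rw [hP, if_neg hb1, if_pos hbm] at hPm
        simp only [mem_insert, mem_singleton, Prod.mk.injEq] at hPm
        rcases hPm with ⟨h1, h2⟩ | ⟨h1, h2⟩ | ⟨h1, h2⟩
        · exact hx0 h1
        · exact hxm h1
        · rw [h1] at h2
          exact one_ne_zero (show (1:F) = 0 by linear_combination -h2)
      · rw [hP, if_neg hb1, if_neg hbm] at hPm
        exact absurd hPm (notMem_empty _)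
  have hinj : Function.Injective (fun x : F => (x, -1 - x)) := by
    intro a b h
    exact (Prod.mk.injEq _ _ _ _ |>.mp h).1
  have hcard : R.card = (univ.filter fun t : F => t ^ 2 = b ^ 2 + 1).card := by
    refine Finset.card_nbij' (i := fun x => b + 1 - b * x)
      (j := fun t => (b + 1 - t) / b) ?_ ?_ ?_ ?_
    · intro x hx
      simp only [mem_coe, hR, mem_filter] at hx
      simp only [mem_coe, mem_filter, mem_univ, true_and]
      linear_combination b * hx.2 + (b * (1 - (b+1)*x)) * h3
    · intro t ht
      simp only [mem_coe, mem_filter, mem_univ, true_and] at ht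
      simp only [mem_coe, hR, mem_filter]
      refine ⟨mem_univ _, ?_⟩
      have hbb := mul_inv_cancel₀ hb
      show b * ((b + 1 - t) / b) ^ 2 + (b + 1) * ((b + 1 - t) / b) - 1 = 0
      simp only [div_eq_mul_inv]
      linear_combination ((b+1-t)^2*b⁻¹ + 1) * hbb + b⁻¹ * ht
        + (b⁻¹*(b^2+b+1-(b+1)*t)) * h3
    · intro x hx
      show (b + 1 - (b + 1 - b * x)) / b = x
      have h : b + 1 - (b + 1 - b * x) = b * x := by ring
      rw [h, mul_div_cancel_left₀ _ hb]
    · intro t ht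
      show b + 1 - b * ((b + 1 - t) / b) = t
      field_simp
      ring
  have hPcard : P.card = if b = 1 ∨ b = -1 then 3 else 0 := by
    have hC : (0:F) ≠ -1 := fun h => hm1 h.symm
    have hB : (-1:F) ≠ 1 := fun h => h1n h.symm
    by_cases hb1 : b = 1
    · rw [hP, if_pos hb1, if_pos (Or.inl hb1)]
      rw [card_insert_of_notMem (by simp [Prod.ext_iff, hC]),
        card_insert_of_notMem (by simp [Prod.ext_iff, h1n]), card_singleton]
    · by_cases hbm : b = -1
      · rw [hP, if_neg hb1, if_pos hbm, if_pos (Or.inr hbm)]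
        rw [card_insert_of_notMem (by simp [Prod.ext_iff, hC]),
          card_insert_of_notMem (by simp [Prod.ext_iff, hB]), card_singleton]
      · rw [hP, if_neg hb1, if_neg hbm, if_neg (by tauto)]
        exact card_empty
  simp only [BCT]
  rw [key, card_union_of_disjoint hdisj, card_image_of_injective _ hinj, hcard, hPcard]


end BoomerangAux

theorem boomerang_spectrum_inverse_char_three (n : ℕ) (hn : 1 ≤ n)
    {F : Type*} [Field F] [Fintype F] [DecidableEq F]
    (hF : Fintype.card F = 3 ^ n)
    (f : F → F) (hf : ∀ x : F, f x = x ^ (3 ^ n - 2)) :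
    (Odd n →
      vSpec f 0 = (3 ^ n - 3) / 2 ∧ vSpec f 1 = 0 ∧ vSpec f 2 = (3 ^ n - 3) / 2 ∧
      vSpec f 3 = 2 ∧ ∀ i : ℕ, 4 ≤ i → vSpec f i = 0) ∧
    (Even n →
      vSpec f 0 = (3 ^ n - 1) / 2 ∧ vSpec f 1 = 2 ∧ vSpec f 2 = (3 ^ n - 9) / 2 ∧
      vSpec f 3 = 0 ∧ vSpec f 4 = 0 ∧ vSpec f 5 = 2 ∧
      ∀ i : ℕ, 6 ≤ i → vSpec f i = 0) := by
  classical
  set M := 3 ^ n with hM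
  have hq3 : 3 ≤ M := by
    rw [hM]
    calc 3 = 3 ^ 1 := (pow_one 3).symm
    _ ≤ 3 ^ n := Nat.pow_le_pow_right (by norm_num) hn
  have h3 : (3:F) = 0 := by
    have hc := FiniteField.cast_card_eq_zero F
    rw [hF, hM] at hc
    push_cast at hc
    exact pow_eq_zero_iff (show n ≠ 0 by omega) |>.mp hc
  have h1n : (1:F) ≠ -1 := by
    intro h
    exact one_ne_zero (show (1:F) = 0 by linear_combination h3 - h)
  have hm1 : (-1:F) ≠ 0 := by
    intro h
    exact one_ne_zero (show (1:F) = 0 by linear_combination -h)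
  have h0m : (0:F) ≠ -1 := fun h => hm1 h.symm
  have hf0 : f 0 = 0 := by rw [hf]; exact zero_pow (by omega)
  have hfi : ∀ x : F, x ≠ 0 → f x = x⁻¹ := by
    intro x hx
    rw [hf]
    have h1 : x ^ (M - 1) = 1 := by
      rw [← hF]; exact FiniteField.pow_card_sub_one_eq_one x hx
    have h2 : x ^ (M - 2) * x = 1 := by
      rw [← pow_succ, show M - 2 + 1 = M - 1 by omega]
      exact h1
    exact eq_inv_of_mul_eq_one_right (by rwa [mul_comm] at h2)
  set g : F → ℕ := fun b => (univ.filter fun t : F => t ^ 2 = b ^ 2 + 1).card with hg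
  have hB : ∀ b : F, b ≠ 0 → BCT f 1 b = g b + (if b = 1 ∨ b = -1 then 3 else 0) := by
    intro b hb
    rw [hg]
    exact BCT_inverse h3 f hf0 hfi hb
  have hg2 : ∀ b : F, g b ≤ 2 := fun b => sq_fiber_card_le_two _
  have hg1iff : ∀ b : F, g b = 1 ↔ b ^ 2 + 1 = 0 := fun b => sq_fiber_card_one_iff h3 _
  have hgsum : ∑ b : F, g b = M - 1 := by rw [hg, sum_sq_fiber h3, hF]
  have hg0 : g 0 = 2 := by
    rw [hg]
    exact sq_fiber_card_of_ne h3 (t0 := 1) (by norm_num) (by norm_num)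
  set τ := (univ.filter fun t : F => t ^ 2 = -1).card with hτ
  have e1m : ((1:F)) ^ 2 + 1 = -1 := by linear_combination h3
  have emm : ((-1:F)) ^ 2 + 1 = -1 := by linear_combination h3
  have hg1 : g 1 = τ := by rw [hg, hτ]; simp only [e1m]
  have hgm : g (-1) = τ := by rw [hg, hτ]; simp only [emm]
  set D : Finset F := {0, 1, -1} with hD
  set S : Finset F := univ \ D with hS
  have hDcard : D.card = 3 := by
    rw [hD, card_insert_of_notMem (by simp [zero_ne_one, h0m]),
      card_insert_of_notMem (by simp [h1n]), card_singleton]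
  have hScard : S.card = M - 3 := by
    rw [hS, card_sdiff_of_subset (subset_univ D), card_univ, hF, hDcard]
  set N0 := (S.filter fun b => g b = 0).card with hN0
  set N1 := (S.filter fun b => g b = 1).card with hN1
  set N2 := (S.filter fun b => g b = 2).card with hN2
  have hNsplit : N0 + N1 + N2 = M - 3 := by
    rw [← hScard, ← card_filter_add_card_filter_not (s := S) (p := fun b => g b = 0)]
    have h23 : (S.filter fun b => ¬ g b = 0).card = N1 + N2 := by
      rw [← card_filter_add_card_filter_not
        (s := S.filter fun b => ¬ g b = 0) (p := fun b => g b = 1)]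
      congr 1
      · rw [filter_filter, hN1]
        congr 1
        apply filter_congr
        intro b _
        constructor
        · exact fun h => h.2
        · intro h; exact ⟨by omega, h⟩
      · rw [filter_filter, hN2]
        congr 1
        apply filter_congr
        intro b _
        have := hg2 b
        constructor
        · intro h; omega
        · intro h; omega
    rw [h23, ← hN0]
    omega
  have hSsum : ∑ b ∈ S, g b = N1 + 2 * N2 := by
    rw [← Finset.sum_filter_add_sum_filter_not S (fun b => g b = 0) g]
    have t0 : ∑ b ∈ S.filter (fun b => g b = 0), g b = 0 :=
      Finset.sum_eq_zero fun b hb => (mem_filter.mp hb).2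
    rw [t0, zero_add,
      ← Finset.sum_filter_add_sum_filter_not (S.filter fun b => ¬ g b = 0) (fun b => g b = 1) g]
    have e1 : (S.filter fun b => ¬ g b = 0).filter (fun b => g b = 1)
        = S.filter fun b => g b = 1 := by
      rw [filter_filter]
      apply filter_congr
      intro b _
      constructor
      · exact fun h => h.2
      · intro h; exact ⟨by omega, h⟩
    have e2 : (S.filter fun b => ¬ g b = 0).filter (fun b => ¬ g b = 1)
        = S.filter fun b => g b = 2 := by
      rw [filter_filter]
      apply filter_congr
      intro b _
      have := hg2 b
      constructor
      · intro h; omega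
      · intro h; omega
    rw [e1, e2]
    have t1 : ∑ b ∈ S.filter (fun b => g b = 1), g b = N1 := by
      have h1 : ∀ b ∈ S.filter (fun b => g b = 1), g b = 1 :=
        fun b hb => (mem_filter.mp hb).2
      rw [Finset.sum_congr rfl h1, Finset.sum_const, smul_eq_mul, mul_one, hN1]
    have t2 : ∑ b ∈ S.filter (fun b => g b = 2), g b = 2 * N2 := by
      have h1 : ∀ b ∈ S.filter (fun b => g b = 2), g b = 2 :=
        fun b hb => (mem_filter.mp hb).2
      rw [Finset.sum_congr rfl h1, Finset.sum_const, smul_eq_mul, hN2, Nat.mul_comm]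
    rw [t1, t2]
  have hDsum : ∑ b ∈ D, g b = 2 + τ + τ := by
    rw [hD, sum_insert (by simp [zero_ne_one, h0m]), sum_insert (by simp [h1n]),
      sum_singleton, hg0, hg1, hgm]
    omega
  have htotal : N1 + 2 * N2 + (2 + τ + τ) = M - 1 := by
    rw [← hSsum, ← hDsum, hS, Finset.sum_sdiff (subset_univ D)]
    exact hgsum
  have hN1τ : N1 = τ := by
    rw [hN1, hτ]
    congr 1
    ext b
    simp only [hS, mem_sdiff, mem_univ, true_and, hD, mem_insert, mem_singleton, mem_filter]
    constructor
    · rintro ⟨hbD, hg1'⟩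
      have h := (hg1iff b).mp hg1'
      exact by linear_combination h
    · intro hb2
      have hbD : ¬(b = 0 ∨ b = 1 ∨ b = -1) := by
        rintro (rfl | rfl | rfl)
        · exact hm1 (by linear_combination -hb2)
        · exact h1n (by linear_combination hb2)
        · exact h1n (by linear_combination hb2)
      exact ⟨hbD, (hg1iff b).mpr (by linear_combination hb2)⟩
  have hvS : ∀ i : ℕ, i ≤ 2 → vSpec f i = (S.filter fun b => g b = i).card := by
    intro i hi
    simp only [vSpec]
    congr 1
    ext b
    simp only [mem_filter, mem_univ, true_and, hS, mem_sdiff, hD, mem_insert, mem_singleton]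
    constructor
    · rintro ⟨hb0, hbct⟩
      rw [hB b hb0] at hbct
      by_cases hb1 : b = 1 ∨ b = -1
      · rw [if_pos hb1] at hbct; omega
      · rw [if_neg hb1] at hbct
        push_neg at hb1
        refine ⟨?_, by omega⟩
        rintro (rfl | rfl | rfl)
        · exact hb0 rfl
        · exact hb1.1 rfl
        · exact hb1.2 rfl
    · rintro ⟨hbD, hgi⟩
      push_neg at hbD
      obtain ⟨hb0, hb1, hbm⟩ := hbD
      refine ⟨hb0, ?_⟩
      rw [hB b hb0, if_neg (by push_neg; exact ⟨hb1, hbm⟩), add_zero]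
      exact hgi
  have hvBig : ∀ i : ℕ, 3 ≤ i → i ≠ 3 + τ → vSpec f i = 0 := by
    intro i h3i hiτ
    simp only [vSpec]
    rw [Finset.card_eq_zero, Finset.eq_empty_iff_forall_notMem]
    intro b hbmem
    rw [mem_filter] at hbmem
    obtain ⟨-, hb0, hbct⟩ := hbmem
    rw [hB b hb0] at hbct
    by_cases hb1 : b = 1 ∨ b = -1
    · rw [if_pos hb1] at hbct
      have hgb : g b = τ := by
        rcases hb1 with rfl | rfl
        · exact hg1
        · exact hgm
      omega
    · rw [if_neg hb1] at hbct
      have := hg2 b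
      omega
  have hv3τ : vSpec f (3 + τ) = 2 := by
    simp only [vSpec]
    have hset : (univ.filter fun b : F => b ≠ 0 ∧ BCT f 1 b = 3 + τ) = {1, -1} := by
      ext b
      simp only [mem_filter, mem_univ, true_and, mem_insert, mem_singleton]
      constructor
      · rintro ⟨hb0, hbct⟩
        rw [hB b hb0] at hbct
        by_cases hb1 : b = 1 ∨ b = -1
        · exact hb1
        · rw [if_neg hb1] at hbct
          have := hg2 b
          omega
      · rintro (rfl | rfl)
        · refine ⟨one_ne_zero, ?_⟩
          rw [hB 1 one_ne_zero, if_pos (Or.inl rfl), hg1]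
          omega
        · refine ⟨hm1, ?_⟩
          rw [hB (-1) hm1, if_pos (Or.inr rfl), hgm]
          omega
    rw [hset, card_insert_of_notMem (by simp [h1n]), card_singleton]
  have hoddq : M % 2 = 1 := by
    rw [hM]
    exact Nat.odd_iff.mp (Odd.pow (by decide))
  constructor
  · intro hodd
    have hmod : M % 4 = 3 := by
      rw [hM]
      obtain ⟨k, hk⟩ := hodd
      subst hk
      rw [pow_succ, pow_mul, Nat.mul_mod, Nat.pow_mod]
      norm_num
    have hns : ¬ IsSquare (-1 : F) := by
      rw [FiniteField.isSquare_neg_one_iff, hF, hmod]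
      simp
    have hτ0 : τ = 0 := by
      rw [hτ]
      exact sq_fiber_card_of_nonsquare hns
    refine ⟨?_, ?_, ?_, ?_, ?_⟩
    · rw [hvS 0 (by norm_num), ← hN0]; omega
    · rw [hvS 1 (by norm_num), ← hN1]; omega
    · rw [hvS 2 (by norm_num), ← hN2]; omega
    · have h := hv3τ; rw [hτ0] at h; simpa using h
    · intro i hi
      exact hvBig i (by omega) (by omega)
  · intro heven
    have h2n : 2 ≤ n := by
      obtain ⟨k, hk⟩ := heven
      omega
    have hq9 : 9 ≤ M := by
      rw [hM]
      calc (9:ℕ) = 3 ^ 2 := by norm_num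
      _ ≤ 3 ^ n := Nat.pow_le_pow_right (by norm_num) h2n
    have hmod : M % 4 = 1 := by
      rw [hM]
      obtain ⟨k, hk⟩ := heven
      subst hk
      rw [← two_mul, pow_mul, Nat.pow_mod]
      norm_num
    have hsq : IsSquare (-1:F) := by
      rw [FiniteField.isSquare_neg_one_iff, hF, hmod]
      omega
    obtain ⟨j, hj⟩ := hsq
    have hj2 : j ^ 2 = -1 := by rw [pow_two]; exact hj.symm
    have hτ2 : τ = 2 := by
      rw [hτ]
      exact sq_fiber_card_of_ne h3 hj2 hm1
    refine ⟨?_, ?_, ?_, ?_, ?_, ?_, ?_⟩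
    · rw [hvS 0 (by norm_num), ← hN0]; omega
    · rw [hvS 1 (by norm_num), ← hN1]; omega
    · rw [hvS 2 (by norm_num), ← hN2]; omega
    · exact hvBig 3 (by norm_num) (by omega)
    · exact hvBig 4 (by norm_num) (by omega)
    · have h := hv3τ; rw [hτ2] at h; simpa using h
    · intro i hi
      exact hvBig i (by omega) (by omega)
end

section
/- Let p be an odd prime, n = 2m an even positive integer with p^m ≡ 1 (mod 3), and let f₄(X) = X^{p^m+2} on F_{p^n}. Then the boomerang uniformity of f₄ satisfies B_{f₄} ≤ 5. -/
open Finset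

theorem bu_f4_le_five (p m : ℕ) (hp : p.Prime) (hpodd : Odd p) (hm : 1 ≤ m)
    (hmod : p ^ m % 3 = 1)
    {F : Type*} [Field F] [Fintype F] [DecidableEq F]
    (hF : Fintype.card F = p ^ (2 * m)) :
    BU (fun x : F => x ^ (p ^ m + 2)) ≤ 5 := by
  set q := p ^ m with hqdef
  -- p ≠ 3, p ≠ 2
  have hp3 : p ≠ 3 := by
    rintro rfl
    have h3 : (3:ℕ) ∣ 3 ^ m := dvd_pow_self 3 (by omega)
    omega
  have hp2 : p ≠ 2 := by
    rintro rfl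
    rw [Nat.odd_iff] at hpodd
    omega
  -- characteristic
  have hC : CharP F (ringChar F) := ringChar.charP F
  obtain ⟨k, hrp, hcard⟩ := FiniteField.card F (ringChar F)
  have hpr : p = ringChar F := by
    have hd : p ∣ ringChar F ^ (k : ℕ) := by
      rw [← hcard, hF]
      exact dvd_pow_self p (by omega)
    exact (Nat.prime_dvd_prime_iff_eq hp hrp).mp (hp.dvd_of_dvd_pow hd)
  haveI hcharp : CharP F p := by rw [hpr]; exact hC
  haveI := Fact.mk hp
  have h2F : (2 : F) ≠ 0 := by
    have : ((2:ℕ) : F) ≠ 0 := by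
      rw [Ne, CharP.cast_eq_zero_iff F p]
      intro hdvd
      exact hp2 ((Nat.prime_dvd_prime_iff_eq hp Nat.prime_two).mp hdvd)
    simpa using this
  have h3F : (3 : F) ≠ 0 := by
    have : ((3:ℕ) : F) ≠ 0 := by
      rw [Ne, CharP.cast_eq_zero_iff F p]
      intro hdvd
      exact hp3 ((Nat.prime_dvd_prime_iff_eq hp Nat.prime_three).mp hdvd)
    simpa using this
  -- the q-power Frobenius
  obtain ⟨φ, hphiz⟩ : ∃ φ : F →+* F, ∀ z : F, φ z = z ^ q :=
    ⟨iterateFrobenius F p m, fun z => by rw [iterateFrobenius_def]⟩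
  have hq2 : q * q = Fintype.card F := by
    rw [hF, hqdef, ← pow_add, two_mul]
  have hqq : ∀ z : F, φ (φ z) = z := by
    intro z
    rw [hphiz, hphiz, ← pow_mul, hq2]
    exact FiniteField.pow_card z
  have hfz : ∀ z : F, z ^ (q + 2) = φ z * z ^ 2 := by
    intro z
    rw [pow_add, hphiz]
  -- main
  unfold BU BCT
  apply Finset.sup_le
  rintro ⟨a, b⟩ hab
  simp only [Finset.mem_filter, Finset.mem_univ, true_and] at hab
  obtain ⟨ha, hb⟩ := hab
  simp only
  have hφa0 : φ a ≠ 0 := by rw [hphiz]; exact pow_ne_zero _ ha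
  -- the quintic polynomial
  set P : Polynomial F :=
      Polynomial.C ((φ a)^2) * Polynomial.X^5
    + Polynomial.C (-(4 * φ b)) * Polynomial.X^4
    + Polynomial.C (2*a^2*(φ a)^2) * Polynomial.X^3
    + Polynomial.C (-(8*(b*(a*φ a)) + 8*(a^2*φ b))) * Polynomial.X^2
    + Polynomial.C (16*b^2 - 3*a^4*(φ a)^2) * Polynomial.X
    + Polynomial.C (8*(a^2*b*(a*φ a)) - 4*(a^4*φ b)) with hPdef
  have hdeg : P.natDegree = 5 := by
    rw [hPdef]
    compute_degree!
  have hP0 : P ≠ 0 := by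
    intro h
    rw [h, Polynomial.natDegree_zero] at hdeg
    exact absurd hdeg (by norm_num)
  -- key lemma: every solution satisfies y = -x - a and P(x-y) = 0
  have key : ∀ x y : F, x ^ (q + 2) - y ^ (q + 2) = b →
      (x + a) ^ (q + 2) - (y + a) ^ (q + 2) = b →
      y = -x - a ∧ Polynomial.eval (x - y) P = 0 := by
    intro x y h1 h2
    have h1' : φ x * x ^ 2 - φ y * y ^ 2 = b := by
      simp only [hfz] at h1; exact h1
    have h2' : (φ x + φ a) * (x + a) ^ 2 - (φ y + φ a) * (y + a) ^ 2 = b := by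
      simp only [hfz, map_add] at h2; exact h2
    have hw0 : x - y ≠ 0 := by
      intro h
      rw [sub_eq_zero] at h
      rw [h, sub_self] at h1
      exact hb h1.symm
    have hA : (φ a * (x - y) + a * (φ x - φ y)) * (x + y + a)
        + (a * (x - y)) * (φ x + φ y + φ a) = 0 := by
      linear_combination h2' - h1'
    have hu : x + y + a = 0 := by
      by_contra hs
      have hA2 : (φ a * (x - y) + a * (φ x - φ y)) * (φ x + φ y + φ a)
          + (φ a * (φ x - φ y)) * (x + y + a) = 0 := by
        have h := congrArg φ hA
        simp only [map_add, map_mul, map_sub, map_zero, hqq] at h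
        linear_combination h
      have hsq : ((φ a * (x - y) + a * (φ x - φ y)) ^ 2
          - (a * (x - y)) * (φ a * (φ x - φ y))) * (x + y + a) = 0 := by
        linear_combination (φ a * (x - y) + a * (φ x - φ y)) * hA - (a * (x - y)) * hA2
      have hS : (φ a * (x - y) + a * (φ x - φ y)) ^ 2
          = a * (x - y) * (φ a * (φ x - φ y)) := by
        rcases mul_eq_zero.mp hsq with h | h
        · linear_combination h
        · exact absurd h hs
      have hfy0 : φ x - φ y ≠ 0 := by
        rw [← map_sub, hphiz]
        exact pow_ne_zero _ hw0
      have hη0 : a * (φ x - φ y) ≠ 0 := mul_ne_zero ha hfy0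
      have hS' : (φ a * (x - y))^2 + (φ a * (x - y)) * (a * (φ x - φ y))
          + (a * (φ x - φ y))^2 = 0 := by linear_combination hS
      have hne : φ a * (x - y) ≠ a * (φ x - φ y) := by
        intro h
        have h3η : (3:F) * (a * (φ x - φ y))^2 = 0 := by
          rw [h] at hS'
          linear_combination hS'
        rcases mul_eq_zero.mp h3η with h' | h'
        · exact h3F h'
        · exact hη0 (pow_eq_zero_iff (two_ne_zero) |>.mp h')
      have hcube : (φ a * (x - y))^3 = (a * (φ x - φ y))^3 := by
        linear_combination (φ a * (x - y) - a * (φ x - φ y)) * hS'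
      have hθq : (φ a * (x - y)) ^ q = a * (φ x - φ y) := by
        rw [← hphiz, map_mul, map_sub, hqq]
      have hηq : (a * (φ x - φ y)) ^ q = φ a * (x - y) := by
        rw [← hphiz, map_mul, map_sub, hqq, hqq]
      have hq1 : (φ a * (x - y)) ^ (q + 1) = (a * (φ x - φ y)) ^ (q + 1) := by
        rw [pow_succ, pow_succ, hθq, hηq]
        ring
      have hρ3 : ((φ a * (x - y)) / (a * (φ x - φ y))) ^ 3 = 1 := by
        rw [div_pow, hcube, div_self (pow_ne_zero _ hη0)]
      have hρq : ((φ a * (x - y)) / (a * (φ x - φ y))) ^ (q + 1) = 1 := by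
        rw [div_pow, hq1, div_self (pow_ne_zero _ hη0)]
      have hρ1 : (φ a * (x - y)) / (a * (φ x - φ y)) = 1 := by
        have hdvd := Nat.dvd_gcd (orderOf_dvd_of_pow_eq_one hρ3)
          (orderOf_dvd_of_pow_eq_one hρq)
        have h3d : ¬ (3 ∣ (q + 1)) := by omega
        have hgcd : Nat.gcd 3 (q + 1) = 1 :=
          (Nat.prime_three.coprime_iff_not_dvd).mpr h3d
        rw [hgcd, Nat.dvd_one] at hdvd
        exact orderOf_eq_one_iff.mp hdvd
      rw [div_eq_iff hη0, one_mul] at hρ1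
      exact hne hρ1
    have hc1 : x * (φ x) ^ 2 - y * (φ y) ^ 2 = φ b := by
      have h := congrArg φ h1'
      simp only [map_sub, map_mul, map_pow, hqq] at h
      exact h
    have hYsum : φ x + φ y + φ a = 0 := by
      have h := congrArg φ hu
      simp only [map_add, map_zero] at h
      exact h
    have hyv : y = -x - a := by linear_combination hu
    have hYv : φ y = -(φ x) - φ a := by linear_combination hYsum
    rw [hYv, hyv] at h1' hc1
    have hG : (2 * φ x + φ a) * ((2*x + a)^2 + a^2) + 2 * (a * φ a) * (2*x + a)
        = 4 * b := by linear_combination 4 * h1'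
    have hG2 : (2*x + a) * ((2 * φ x + φ a)^2 + (φ a)^2)
        + 2 * (a * φ a) * (2 * φ x + φ a) = 4 * φ b := by linear_combination 4 * hc1
    refine ⟨hyv, ?_⟩
    rw [hyv, hPdef]
    simp only [Polynomial.eval_add, Polynomial.eval_mul, Polynomial.eval_pow,
      Polynomial.eval_C, Polynomial.eval_X]
    linear_combination
      (-((2*x+a) * (4*b - 2*(a*φ a)*(2*x+a) + (2*φ x + φ a)*((2*x+a)^2 + a^2))
        + 2*(a*φ a)*((2*x+a)^2 + a^2))) * hG + ((2*x+a)^2 + a^2)^2 * hG2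
  -- counting
  refine le_trans (Finset.card_le_card_of_injOn (t := P.roots.toFinset)
    (fun v : F × F => v.1 - v.2) ?_ ?_) ?_
  · intro v hv
    obtain ⟨hv1, hv2⟩ := (Finset.mem_filter.mp hv).2
    exact Multiset.mem_toFinset.mpr (Polynomial.mem_roots'.mpr
      ⟨hP0, (key v.1 v.2 hv1 hv2).2⟩)
  · intro v hv v' hv' hvv
    obtain ⟨hv1, hv2⟩ := (Finset.mem_filter.mp (Finset.mem_coe.mp hv)).2
    obtain ⟨hv1', hv2'⟩ := (Finset.mem_filter.mp (Finset.mem_coe.mp hv')).2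
    have k1 := (key v.1 v.2 hv1 hv2).1
    have k2 := (key v'.1 v'.2 hv1' hv2').1
    have h1 : v.1 = v'.1 := by
      apply mul_left_cancel₀ h2F
      linear_combination hvv + k1 - k2
    have h2 : v.2 = v'.2 := by rw [k1, k2, h1]
    exact Prod.ext h1 h2
  · exact le_trans (Multiset.toFinset_card_le _)
      (le_trans (Polynomial.card_roots' P) (le_of_eq hdeg))
end
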